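/- arXiv:2601.20873 — 5 statements merged into one kernel-verified Lean document; each statement's English description precedes it below -/
import Mathlib

section
/- For real α > -1, real y > 0, and natural numbers m, n with n ≤ m, the function I_{m,n}^{(α)}(y) factorizes as I_{m,n}^{(α)}(y) = L_n^{(α)}(-1/y) · I_{m,0}^{(α)}(y). -/
open MeasureTheory Real Set

/-- Generalized Laguerre polynomial `L_n^{(α)}(x)`. -/
noncomputable def genLaguerre (α : ℝ) (n : ℕ) (x : ℝ) : ℝ :=
  ∑ j ∈ Finset.range (n + 1),
    (-1 : ℝ) ^ j * (Real.Gamma (α + n + 1) /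
      (Real.Gamma (α + j + 1) * (Nat.factorial (n - j)))) * x ^ j / (Nat.factorial j)

/-- The function `I_{m,n}^{(α,β)}(y)`. -/
noncomputable def Imn (α β y : ℝ) (m n : ℕ) : ℝ :=
  ∫ ρ in Ioi (0 : ℝ), (1 + y * ρ)⁻¹ * ρ ^ α * Real.exp (-ρ) *
    genLaguerre α m ρ * genLaguerre β n ρ

namespace ImnAux

open Finset

lemma diff_rec (m : ℕ) (f : ℕ → ℝ) :
    ∑ j ∈ range (m + 2), (-1 : ℝ) ^ j * ((m + 1).choose j) * f j
      = - ∑ j ∈ range (m + 1), (-1 : ℝ) ^ j * (m.choose j) * (f (j + 1) - f j) := by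
  rw [Finset.sum_range_succ' (fun j => (-1 : ℝ) ^ j * ((m + 1).choose j) * f j)]
  have h1 : ∀ j, (-1 : ℝ) ^ (j+1) * ((m + 1).choose (j+1)) * f (j+1)
      = -((-1:ℝ)^j * (m.choose j) * f (j+1)) - ((-1:ℝ)^j * (m.choose (j+1)) * f (j+1)) := by
    intro j
    rw [Nat.choose_succ_succ]
    push_cast
    ring
  rw [Finset.sum_congr rfl (fun j _ => h1 j), Finset.sum_sub_distrib]
  have h2 : ∑ j ∈ range (m+1), (-1:ℝ)^j * (m.choose (j+1)) * f (j+1)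
      = ∑ j ∈ range m, (-1:ℝ)^j * (m.choose (j+1)) * f (j+1) := by
    rw [Finset.sum_range_succ, Nat.choose_succ_self]; simp
  have h3 : ∑ j ∈ range (m+1), (-1:ℝ)^j * (m.choose j) * f j
      = (∑ j ∈ range m, (-1:ℝ)^(j+1) * (m.choose (j+1)) * f (j+1)) + f 0 := by
    rw [Finset.sum_range_succ' (fun j => (-1 : ℝ) ^ j * (m.choose j) * f j)]
    simp
  have hr : ∑ j ∈ range (m+1), (-1:ℝ)^j * (m.choose j) * (f (j+1) - f j)
      = (∑ j ∈ range (m+1), (-1:ℝ)^j * (m.choose j) * f (j+1))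
        - ∑ j ∈ range (m+1), (-1:ℝ)^j * (m.choose j) * f j := by
    simp_rw [mul_sub]; rw [Finset.sum_sub_distrib]
  have h5 : ∑ j ∈ range m, (-1:ℝ)^(j+1) * (m.choose (j+1)) * f (j+1)
      = -∑ j ∈ range (m+1), (-1:ℝ)^j * (m.choose (j+1)) * f (j+1) := by
    rw [h2, ← Finset.sum_neg_distrib]
    exact Finset.sum_congr rfl fun j _ => by ring
  rw [hr, h3, h5, Finset.sum_neg_distrib]
  simp only [Nat.choose_zero_right, Nat.cast_one, pow_zero]
  ring

lemma alt_sum_poly (k : ℕ) : ∀ (m : ℕ), k < m → ∀ (β : ℝ),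
    ∑ j ∈ range (m + 1), (-1 : ℝ) ^ j * (m.choose j) *
      (∏ i ∈ range k, (β + j + 1 + i)) = 0 := by
  induction k with
  | zero =>
    intro m hm β
    simp only [range_zero, prod_empty, mul_one]
    have h0 := Int.alternating_sum_range_choose_of_ne (show m ≠ 0 by omega)
    have h : ((∑ i ∈ range (m+1), (-1:ℤ)^i * m.choose i : ℤ) : ℝ) = 0 := by
      rw [h0]; simp
    push_cast at h
    simpa using h
  | succ k ih =>
    intro m hm β
    obtain ⟨m', rfl⟩ : ∃ m', m = m' + 1 := ⟨m - 1, by omega⟩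
    have hrec := diff_rec m' (fun j => ∏ i ∈ range (k+1), (β + j + 1 + i))
    rw [show m' + 1 + 1 = m' + 2 from rfl, hrec]
    have hd : ∀ j : ℕ, (∏ i ∈ range (k+1), (β + (j+1 : ℕ) + 1 + i))
        - ∏ i ∈ range (k+1), (β + j + 1 + i)
        = (k+1 : ℝ) * ∏ i ∈ range k, ((β+1) + j + 1 + i) := by
      intro j
      have p1 : ∏ i ∈ range k, (β + ((j:ℝ)+1) + 1 + i) = ∏ i ∈ range k, ((β+1) + j + 1 + i) :=
        Finset.prod_congr rfl fun i _ => by ring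
      have p2 : ∏ i ∈ range k, (β + (j:ℝ) + 1 + ((i:ℝ)+1)) = ∏ i ∈ range k, ((β+1) + j + 1 + i) :=
        Finset.prod_congr rfl fun i _ => by ring
      have e1 : ∏ i ∈ range (k+1), (β + (j+1 : ℕ) + 1 + i)
          = (∏ i ∈ range k, ((β+1) + j + 1 + i)) * (β + ((j:ℝ)+1) + 1 + k) := by
        push_cast
        rw [Finset.prod_range_succ, p1]
      have e2 : ∏ i ∈ range (k+1), (β + j + 1 + i)
          = (∏ i ∈ range k, ((β+1) + j + 1 + i)) * (β + (j:ℝ) + 1 + 0) := by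
        rw [Finset.prod_range_succ' (fun i => (β + j + 1 + (i:ℝ)))]
        push_cast
        rw [p2]
      rw [e1, e2]; ring
    have hc : ∀ j ∈ range (m'+1), (-1:ℝ)^j * (m'.choose j) *
        ((∏ i ∈ range (k+1), (β + (j+1:ℕ) + 1 + i)) - ∏ i ∈ range (k+1), (β + j + 1 + i))
        = (k+1:ℝ) * ((-1:ℝ)^j * (m'.choose j) * ∏ i ∈ range k, ((β+1) + j + 1 + i)) := by
      intro j _; rw [hd j]; ring
    rw [Finset.sum_congr rfl hc, ← Finset.mul_sum, ih m' (by omega) (β+1)]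
    ring

lemma Gamma_add_nat' (x : ℝ) (hx : 0 < x) (k : ℕ) :
    Real.Gamma (x + k) = Real.Gamma x * ∏ i ∈ range k, (x + i) := by
  induction k with
  | zero => simp
  | succ k ih =>
    have h1 : x + (k+1 : ℕ) = (x + k) + 1 := by push_cast; ring
    rw [h1, Real.Gamma_add_one (by positivity), ih, Finset.prod_range_succ]
    ring

lemma base_eq (α : ℝ) (N : ℕ) : ∀ x ∈ Ioi (0:ℝ),
    Real.exp (-x) * x ^ ((α + N + 1) - 1) = x ^ α * Real.exp (-x) * x ^ N := by
  intro x hx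
  have hx0 : (0:ℝ) < x := hx
  have : x ^ ((α + N + 1) - 1) = x ^ α * x ^ (N:ℕ) := by
    rw [show (α + N + 1) - 1 = α + N by ring, Real.rpow_add hx0, Real.rpow_natCast]
  rw [this]; ring

lemma int_base (α : ℝ) (hα : -1 < α) (N : ℕ) :
    IntegrableOn (fun ρ : ℝ => ρ ^ α * Real.exp (-ρ) * ρ ^ N) (Ioi 0) := by
  have hs : (0:ℝ) < α + N + 1 := by
    have : (0:ℝ) ≤ N := Nat.cast_nonneg N
    linarith
  exact (Real.GammaIntegral_convergent hs).congr_fun (base_eq α N) measurableSet_Ioi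

lemma moment (α : ℝ) (hα : -1 < α) (N : ℕ) :
    ∫ ρ in Ioi (0:ℝ), ρ ^ α * Real.exp (-ρ) * ρ ^ N = Real.Gamma (α + N + 1) := by
  have hs : (0:ℝ) < α + N + 1 := by
    have : (0:ℝ) ≤ N := Nat.cast_nonneg N
    linarith
  rw [Real.Gamma_eq_integral hs]
  exact setIntegral_congr_fun measurableSet_Ioi (fun x hx => (base_eq α N x hx).symm)

/-- coefficient of `x^j` in `genLaguerre α m x` -/
noncomputable def lagC (α : ℝ) (m j : ℕ) : ℝ :=
  (-1 : ℝ) ^ j * (Real.Gamma (α + m + 1) /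
      (Real.Gamma (α + j + 1) * (Nat.factorial (m - j)))) / (Nat.factorial j)

lemma genLaguerre_eq (α : ℝ) (m : ℕ) (x : ℝ) :
    genLaguerre α m x = ∑ j ∈ range (m+1), lagC α m j * x ^ j := by
  unfold genLaguerre lagC
  exact Finset.sum_congr rfl fun j _ => by ring

lemma expand_pt (α : ℝ) (m k : ℕ) (ρ : ℝ) :
    ρ ^ α * Real.exp (-ρ) * ρ ^ k * genLaguerre α m ρ
      = ∑ j ∈ range (m+1), lagC α m j * (ρ ^ α * Real.exp (-ρ) * ρ ^ (k + j)) := by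
  rw [genLaguerre_eq, Finset.mul_sum]
  exact Finset.sum_congr rfl fun j _ => by rw [pow_add]; ring

lemma orth (α : ℝ) (hα : -1 < α) (m k : ℕ) (hk : k < m) :
    ∫ ρ in Ioi (0:ℝ), ρ ^ α * Real.exp (-ρ) * ρ ^ k * genLaguerre α m ρ = 0 := by
  have hfe : (fun ρ : ℝ => ρ ^ α * Real.exp (-ρ) * ρ ^ k * genLaguerre α m ρ)
      = fun ρ => ∑ j ∈ range (m+1), lagC α m j * (ρ ^ α * Real.exp (-ρ) * ρ ^ (k + j)) :=
    funext (expand_pt α m k)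
  rw [hfe, integral_finset_sum _ (fun j _ => ((int_base α hα (k+j)).const_mul _))]
  simp_rw [MeasureTheory.integral_const_mul, moment α hα]
  have key : ∀ j ∈ range (m+1), lagC α m j * Real.Gamma (α + (k+j:ℕ) + 1)
      = (Real.Gamma (α + m + 1) / m.factorial) *
        ((-1:ℝ)^j * (m.choose j) * ∏ i ∈ range k, (α + j + 1 + i)) := by
    intro j hj
    have hjm : j ≤ m := by simpa using Nat.lt_succ_iff.mp (Finset.mem_range.mp hj)
    have hj0 : (0:ℝ) ≤ j := Nat.cast_nonneg j
    have hGj : Real.Gamma (α + j + 1) ≠ 0 := (Real.Gamma_pos_of_pos (by linarith)).ne'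
    have harg : α + (k+j:ℕ) + 1 = (α + j + 1) + (k:ℕ) := by push_cast; ring
    rw [lagC, harg, Gamma_add_nat' _ (by linarith) k]
    have hfac : (m.choose j : ℝ) * (j.factorial) * ((m-j).factorial) = (m.factorial) := by
      exact_mod_cast congrArg (Nat.cast : ℕ → ℝ) (Nat.choose_mul_factorial_mul_factorial hjm)
    have hf1 : ((m-j).factorial : ℝ) ≠ 0 := Nat.cast_ne_zero.mpr (Nat.factorial_ne_zero _)
    have hf2 : ((j).factorial : ℝ) ≠ 0 := Nat.cast_ne_zero.mpr (Nat.factorial_ne_zero _)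
    have hf3 : ((m).factorial : ℝ) ≠ 0 := Nat.cast_ne_zero.mpr (Nat.factorial_ne_zero _)
    field_simp
    rw [← hfac]; ring
  rw [Finset.sum_congr rfl key, ← Finset.mul_sum, alt_sum_poly k m hk α]
  ring

lemma intL (α : ℝ) (hα : -1 < α) (m k : ℕ) :
    IntegrableOn (fun ρ : ℝ => ρ ^ α * Real.exp (-ρ) * ρ ^ k * genLaguerre α m ρ) (Ioi 0) := by
  have hfe : (fun ρ : ℝ => ρ ^ α * Real.exp (-ρ) * ρ ^ k * genLaguerre α m ρ)
      = fun ρ => ∑ j ∈ range (m+1), lagC α m j * (ρ ^ α * Real.exp (-ρ) * ρ ^ (k + j)) :=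
    funext (expand_pt α m k)
  rw [hfe]
  exact integrable_finset_sum _ (fun j _ => ((int_base α hα (k+j)).const_mul _))

lemma intInv (α y : ℝ) (hα : -1 < α) (hy : 0 < y) (m j : ℕ) :
    IntegrableOn (fun ρ : ℝ => (1 + y * ρ)⁻¹ * ρ ^ α * Real.exp (-ρ) *
      genLaguerre α m ρ * ρ ^ j) (Ioi 0) := by
  have hg : IntegrableOn (fun ρ : ℝ =>
      ∑ i ∈ range (m+1), |lagC α m i| * (ρ ^ α * Real.exp (-ρ) * ρ ^ (j + i))) (Ioi 0) :=
    integrable_finset_sum _ (fun i _ => ((int_base α hα (j+i)).const_mul _))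
  refine Integrable.mono' hg ?_ ?_
  · apply Measurable.aestronglyMeasurable
    unfold genLaguerre
    fun_prop
  · rw [ae_restrict_iff' measurableSet_Ioi]
    filter_upwards with ρ
    intro hρ
    have hρ0 : (0:ℝ) < ρ := hρ
    have hb : (0:ℝ) < 1 + y * ρ := by nlinarith
    have hinv0 : (0:ℝ) ≤ (1 + y * ρ)⁻¹ := inv_nonneg.mpr hb.le
    have hinv : (1 + y * ρ)⁻¹ ≤ 1 := by
      rw [inv_le_one_iff₀]
      right; nlinarith
    have hL : |genLaguerre α m ρ| ≤ ∑ i ∈ range (m+1), |lagC α m i| * ρ ^ i := by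
      rw [genLaguerre_eq]
      refine (Finset.abs_sum_le_sum_abs _ _).trans ?_
      refine Finset.sum_le_sum fun i _ => ?_
      rw [abs_mul, abs_pow, abs_of_pos hρ0]
    have habs : ‖(1 + y * ρ)⁻¹ * ρ ^ α * Real.exp (-ρ) * genLaguerre α m ρ * ρ ^ j‖
        = (1 + y * ρ)⁻¹ * (ρ ^ α * Real.exp (-ρ) * ρ ^ j) * |genLaguerre α m ρ| := by
      rw [Real.norm_eq_abs, abs_mul, abs_mul, abs_mul, abs_mul,
        abs_of_nonneg hinv0, abs_of_nonneg (Real.rpow_nonneg hρ0.le α),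
        abs_of_nonneg (Real.exp_nonneg _), abs_of_nonneg (pow_nonneg hρ0.le j)]
      ring
    rw [habs]
    calc (1 + y * ρ)⁻¹ * (ρ ^ α * Real.exp (-ρ) * ρ ^ j) * |genLaguerre α m ρ|
        ≤ 1 * (ρ ^ α * Real.exp (-ρ) * ρ ^ j) * (∑ i ∈ range (m+1), |lagC α m i| * ρ ^ i) := by
          refine mul_le_mul (mul_le_mul_of_nonneg_right hinv (by positivity)) hL
            (abs_nonneg _) (by positivity)
      _ = ∑ i ∈ range (m+1), |lagC α m i| * (ρ ^ α * Real.exp (-ρ) * ρ ^ (j + i)) := by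
          rw [Finset.mul_sum]
          exact Finset.sum_congr rfl fun i _ => by rw [pow_add]; ring

lemma genLaguerre_zero (α : ℝ) (hα : -1 < α) (x : ℝ) : genLaguerre α 0 x = 1 := by
  have hG : Real.Gamma (α + 1) ≠ 0 := (Real.Gamma_pos_of_pos (by linarith)).ne'
  unfold genLaguerre
  simp only [zero_add, Finset.sum_range_one, pow_zero, Nat.cast_zero, Nat.sub_self,
    Nat.factorial_zero, Nat.cast_one, mul_one, one_mul, add_zero, div_one]
  exact div_self hG

end ImnAux

open ImnAux Finset in
theorem Imn_factorize (α y : ℝ) (hα : -1 < α) (hy : 0 < y) (m n : ℕ) (hnm : n ≤ m) :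
    Imn α α y m n = genLaguerre α n (-1 / y) * Imn α α y m 0 := by
  set J : ℕ → ℝ := fun j => ∫ ρ in Ioi (0:ℝ),
    (1 + y * ρ)⁻¹ * ρ ^ α * Real.exp (-ρ) * genLaguerre α m ρ * ρ ^ j with hJdef
  have hy0 : y ≠ 0 := hy.ne'
  -- recurrence
  have hrec : ∀ j, j < m → J (j+1) = -(1/y) * J j := by
    intro j hjm
    have hpt : ∀ ρ ∈ Ioi (0:ℝ),
        (1 + y * ρ)⁻¹ * ρ ^ α * Real.exp (-ρ) * genLaguerre α m ρ * ρ ^ (j+1)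
        = (1/y) * (ρ ^ α * Real.exp (-ρ) * ρ ^ j * genLaguerre α m ρ)
          - (1/y) * ((1 + y * ρ)⁻¹ * ρ ^ α * Real.exp (-ρ) * genLaguerre α m ρ * ρ ^ j) := by
      intro ρ hρ
      have hρ0 : (0:ℝ) < ρ := hρ
      have hb : (1:ℝ) + y * ρ ≠ 0 := by nlinarith
      field_simp
      ring
    have : J (j+1) = ∫ ρ in Ioi (0:ℝ),
        ((1/y) * (ρ ^ α * Real.exp (-ρ) * ρ ^ j * genLaguerre α m ρ)
          - (1/y) * ((1 + y * ρ)⁻¹ * ρ ^ α * Real.exp (-ρ) * genLaguerre α m ρ * ρ ^ j)) := by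
      rw [hJdef]
      exact setIntegral_congr_fun measurableSet_Ioi hpt
    rw [this, integral_sub ((intL α hα m j).const_mul _) ((intInv α y hα hy m j).const_mul _),
      MeasureTheory.integral_const_mul, MeasureTheory.integral_const_mul, orth α hα m j hjm]
    simp [hJdef]
  -- closed form
  have hJ : ∀ j, j ≤ m → J j = (-1/y) ^ j * J 0 := by
    intro j
    induction j with
    | zero => intro _; simp
    | succ j ih =>
      intro hj
      rw [hrec j (by omega), ih (by omega), pow_succ]
      ring
  -- expansion of Imn α α y m n
  have hexp : Imn α α y m n = ∑ i ∈ range (n+1), lagC α n i * J i := by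
    unfold Imn
    have hfe : ∀ ρ : ℝ, (1 + y * ρ)⁻¹ * ρ ^ α * Real.exp (-ρ) *
        genLaguerre α m ρ * genLaguerre α n ρ
        = ∑ i ∈ range (n+1), lagC α n i *
          ((1 + y * ρ)⁻¹ * ρ ^ α * Real.exp (-ρ) * genLaguerre α m ρ * ρ ^ i) := by
      intro ρ
      rw [genLaguerre_eq α n ρ, Finset.mul_sum]
      exact Finset.sum_congr rfl fun i _ => by ring
    rw [show (fun ρ : ℝ => (1 + y * ρ)⁻¹ * ρ ^ α * Real.exp (-ρ) *
        genLaguerre α m ρ * genLaguerre α n ρ)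
      = fun ρ => ∑ i ∈ range (n+1), lagC α n i *
          ((1 + y * ρ)⁻¹ * ρ ^ α * Real.exp (-ρ) * genLaguerre α m ρ * ρ ^ i) from funext hfe,
      integral_finset_sum _ (fun i _ => ((intInv α y hα hy m i).const_mul _))]
    simp_rw [MeasureTheory.integral_const_mul]
    rfl
  -- J 0 = Imn α α y m 0
  have hJ0 : Imn α α y m 0 = J 0 := by
    unfold Imn
    rw [hJdef]
    refine setIntegral_congr_fun measurableSet_Ioi fun ρ _ => ?_
    rw [genLaguerre_zero α hα, pow_zero]
  rw [hexp, hJ0, genLaguerre_eq α n (-1/y), Finset.sum_mul]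
  refine Finset.sum_congr rfl fun i hi => ?_
  have him : i ≤ m := by
    have := Finset.mem_range.mp hi; omega
  rw [hJ i him]
  ring
end

section
/- For real α > -1, y > 0, and natural number n: ∫_0^∞ (1+yρ)^{-1} ρ^α e^{-ρ} L_n^{(α)}(ρ) dρ = Γ(n+α+1) · (1/y) · U(n+1, 1-α, 1/y), where U is Kummer's confluent hypergeometric function of the second kind. -/
open MeasureTheory Real Set

/-- Tricomi confluent hypergeometric function via its integral representation,
valid for Re a > 0, z > 0. -/
noncomputable def KummerU (a b z : ℝ) : ℝ :=
  (Real.Gamma a)⁻¹ * ∫ t in Ioi (0 : ℝ), Real.exp (-z * t) * t ^ (a - 1) * (1 + t) ^ (b - a - 1)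

lemma int_exp_neg_mul {c : ℝ} (hc : 0 < c) :
    ∫ u in Ioi (0:ℝ), Real.exp (-(c * u)) = c⁻¹ := by
  have h := integral_comp_mul_left_Ioi (fun x => Real.exp (-x)) 0 hc
  simp only [mul_zero, integral_exp_neg_Ioi, neg_zero, Real.exp_zero, smul_eq_mul, mul_one] at h
  exact h

lemma int_rpow_exp {a s : ℝ} (ha : -1 < a) (hs : 0 < s) :
    ∫ x in Ioi (0:ℝ), x ^ a * Real.exp (-(s * x)) = Real.Gamma (a + 1) * s ^ (-(a + 1)) := by
  have h := integral_rpow_mul_exp_neg_mul_rpow one_pos ha hs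
  simp only [Real.rpow_one, neg_mul, div_one] at h ⊢
  rw [h]; ring

lemma intOn_rpow_exp {a s : ℝ} (ha : -1 < a) (hs : 0 < s) :
    IntegrableOn (fun x => x ^ a * Real.exp (-(s * x))) (Ioi (0:ℝ)) := by
  have h := integrableOn_rpow_mul_exp_neg_mul_rpow ha one_pos hs
  simpa only [Real.rpow_one, neg_mul] using h

lemma rpow_neg_natCast {s : ℝ} (hs : 0 < s) (j : ℕ) : s ^ (-(j:ℝ)) = s⁻¹ ^ j := by
  rw [Real.rpow_neg hs.le, Real.rpow_natCast, inv_pow]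

lemma genLaguerre_expand {α : ℝ} (n : ℕ) {s : ℝ} {ρ : ℝ} (hρ : ρ ∈ Ioi (0:ℝ)) :
    ρ ^ α * Real.exp (-(s * ρ)) * genLaguerre α n ρ
      = ∑ j ∈ Finset.range (n + 1),
          ((-1:ℝ) ^ j * (Real.Gamma (α + n + 1) /
              (Real.Gamma (α + j + 1) * (Nat.factorial (n - j)))) / (Nat.factorial j))
            * (ρ ^ (α + j) * Real.exp (-(s * ρ))) := by
  rw [genLaguerre, Finset.mul_sum]
  refine Finset.sum_congr rfl fun j hj => ?_
  rw [Real.rpow_add hρ, Real.rpow_natCast]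
  ring

lemma intOn_laguerre {α : ℝ} (ha : -1 < α) (n : ℕ) {s : ℝ} (hs : 0 < s) :
    IntegrableOn (fun ρ => ρ ^ α * Real.exp (-(s * ρ)) * genLaguerre α n ρ) (Ioi (0:ℝ)) := by
  have h : IntegrableOn (fun ρ => ∑ j ∈ Finset.range (n + 1),
      ((-1:ℝ) ^ j * (Real.Gamma (α + n + 1) /
          (Real.Gamma (α + j + 1) * (Nat.factorial (n - j)))) / (Nat.factorial j))
        * (ρ ^ (α + j) * Real.exp (-(s * ρ)))) (Ioi (0:ℝ)) := by
    refine integrable_finset_sum _ fun j hj => ?_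
    have haj : (-1:ℝ) < α + j := by
      have : (0:ℝ) ≤ j := Nat.cast_nonneg j
      linarith
    exact (intOn_rpow_exp haj hs).const_mul _
  exact h.congr_fun (fun ρ hρ => (genLaguerre_expand n hρ).symm) measurableSet_Ioi

lemma laplace_laguerre {α : ℝ} (ha : -1 < α) (n : ℕ) {s : ℝ} (hs : 0 < s) :
    ∫ ρ in Ioi (0:ℝ), ρ ^ α * Real.exp (-(s * ρ)) * genLaguerre α n ρ
      = Real.Gamma (α + n + 1) / (Nat.factorial n) * (s - 1) ^ n * s ^ (-(α + n + 1)) := by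
  have haj : ∀ j : ℕ, (-1:ℝ) < α + j := fun j => by
    have : (0:ℝ) ≤ j := Nat.cast_nonneg j
    linarith
  rw [setIntegral_congr_fun measurableSet_Ioi (fun ρ hρ => genLaguerre_expand n hρ),
    integral_finset_sum _ (fun j hj => ((intOn_rpow_exp (haj j) hs).const_mul _))]
  simp_rw [MeasureTheory.integral_const_mul, int_rpow_exp (haj _) hs]
  have key : ∀ j ∈ Finset.range (n+1),
      ((-1:ℝ) ^ j * (Real.Gamma (α + n + 1) /
          (Real.Gamma (α + j + 1) * (Nat.factorial (n - j)))) / (Nat.factorial j))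
        * (Real.Gamma (α + j + 1) * s ^ (-(α + j + 1)))
      = (Real.Gamma (α + n + 1) * s ^ (-(α+1)) / (Nat.factorial n))
          * ((-s⁻¹) ^ j * 1 ^ (n - j) * (n.choose j)) := by
    intro j hj
    have hj' : j ≤ n := Nat.lt_succ_iff.mp (Finset.mem_range.mp hj)
    have hΓ : Real.Gamma (α + j + 1) ≠ 0 := by
      refine (Real.Gamma_pos_of_pos ?_).ne'
      have : (0:ℝ) ≤ j := Nat.cast_nonneg j
      linarith
    have hch : ((n.choose j : ℝ)) * (Nat.factorial j) * (Nat.factorial (n-j)) = (Nat.factorial n) := by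
      exact_mod_cast Nat.choose_mul_factorial_mul_factorial hj'
    have hpow : s ^ (-(α + (j:ℝ) + 1)) = s ^ (-(α+1)) * (s⁻¹) ^ j := by
      rw [show -(α + (j:ℝ) + 1) = -(α+1) + (-(j:ℝ)) by ring, Real.rpow_add hs,
        rpow_neg_natCast hs]
    rw [hpow, one_pow, neg_pow]
    field_simp
    rw [← hch]
    ring
  rw [Finset.sum_congr rfl key, ← Finset.mul_sum, ← add_pow]
  have h1 : s ^ (-(α + (n:ℝ) + 1)) = s ^ (-(α+1)) * (s⁻¹) ^ n := by
    rw [show -(α + (n:ℝ) + 1) = -(α+1) + (-(n:ℝ)) by ring, Real.rpow_add hs,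
      rpow_neg_natCast hs]
  have h2 : (-s⁻¹ + 1 : ℝ) = (s - 1) * s⁻¹ := by field_simp; ring
  rw [h2, mul_pow, h1]
  ring

noncomputable def auxF (α y : ℝ) (n : ℕ) (ρ u : ℝ) : ℝ :=
  (ρ ^ α * Real.exp (-ρ) * genLaguerre α n ρ) * (Real.exp (-u) * Real.exp (-(y * u * ρ)))

lemma continuous_genLaguerre (α : ℝ) (n : ℕ) : Continuous (genLaguerre α n) := by
  unfold genLaguerre
  fun_prop

lemma auxF_integrable (α y : ℝ) (hα : -1 < α) (hy : 0 < y) (n : ℕ) :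
    Integrable (Function.uncurry (auxF α y n))
      ((volume.restrict (Ioi 0)).prod (volume.restrict (Ioi 0))) := by
  have hmeas : Measurable (Function.uncurry (auxF α y n)) := by
    have hc := (continuous_genLaguerre α n).measurable
    unfold Function.uncurry auxF
    fun_prop
  have hg1 : IntegrableOn (fun ρ => ρ ^ α * Real.exp (-ρ) * genLaguerre α n ρ) (Ioi (0:ℝ)) := by
    have h := intOn_laguerre hα n one_pos
    simpa only [one_mul] using h
  have hexp : IntegrableOn (fun u => Real.exp (-u)) (Ioi (0:ℝ)) := by
    have h := intOn_rpow_exp (a := 0) (by norm_num) one_pos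
    simpa only [Real.rpow_zero, one_mul] using h
  have hprod : Integrable (fun z : ℝ × ℝ =>
      |z.1 ^ α * Real.exp (-z.1) * genLaguerre α n z.1| * Real.exp (-z.2))
      ((volume.restrict (Ioi 0)).prod (volume.restrict (Ioi 0))) := hg1.abs.mul_prod hexp
  refine hprod.mono' hmeas.aestronglyMeasurable ?_
  rw [Measure.prod_restrict]
  filter_upwards [ae_restrict_mem (measurableSet_Ioi.prod measurableSet_Ioi)] with z hz
  obtain ⟨hz1, hz2⟩ := hz
  have h1 : Real.exp (-(y * z.2 * z.1)) ≤ 1 := by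
    rw [Real.exp_le_one_iff]
    have := mul_pos (mul_pos hy (mem_Ioi.mp hz2)) (mem_Ioi.mp hz1)
    linarith
  have h2 : Real.exp (-z.2) * Real.exp (-(y * z.2 * z.1)) ≤ Real.exp (-z.2) :=
    mul_le_of_le_one_right (Real.exp_pos _).le h1
  calc ‖Function.uncurry (auxF α y n) z‖
      = |z.1 ^ α * Real.exp (-z.1) * genLaguerre α n z.1| *
          (Real.exp (-z.2) * Real.exp (-(y * z.2 * z.1))) := by
        rw [Function.uncurry, auxF, Real.norm_eq_abs, abs_mul]
        congr 1
        rw [abs_mul, Real.abs_exp, Real.abs_exp]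
    _ ≤ |z.1 ^ α * Real.exp (-z.1) * genLaguerre α n z.1| * Real.exp (-z.2) :=
        mul_le_mul_of_nonneg_left h2 (abs_nonneg _)

theorem I0n_eq_kummerU (α y : ℝ) (hα : -1 < α) (hy : 0 < y) (n : ℕ) :
    (∫ ρ in Ioi (0 : ℝ), (1 + y * ρ)⁻¹ * ρ ^ α * Real.exp (-ρ) * genLaguerre α n ρ) =
      Real.Gamma (n + α + 1) * (1 / y) * KummerU (n + 1) (1 - α) (1 / y) := by
  have hfac : ((Nat.factorial n : ℝ)) ≠ 0 := Nat.cast_ne_zero.mpr n.factorial_ne_zero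
  have step1 : (∫ ρ in Ioi (0:ℝ), (1 + y * ρ)⁻¹ * ρ ^ α * Real.exp (-ρ) * genLaguerre α n ρ)
      = ∫ ρ in Ioi (0:ℝ), ∫ u in Ioi (0:ℝ), auxF α y n ρ u := by
    refine setIntegral_congr_fun measurableSet_Ioi fun ρ hρ => ?_
    have hρ' : (0:ℝ) < ρ := hρ
    have hc : (0:ℝ) < 1 + y * ρ := by nlinarith
    have he : (fun u => Real.exp (-u) * Real.exp (-(y * u * ρ)))
        = fun u => Real.exp (-((1 + y * ρ) * u)) := by
      funext u; rw [← Real.exp_add]; ring_nf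
    unfold auxF
    rw [MeasureTheory.integral_const_mul, he, int_exp_neg_mul hc]
    ring
  have step3 : ∀ u ∈ Ioi (0:ℝ), (∫ ρ in Ioi (0:ℝ), auxF α y n ρ u)
      = Real.Gamma (α + n + 1) / (Nat.factorial n)
          * (Real.exp (-u) * ((y * u) ^ n * (1 + y * u) ^ (-(α + n + 1)))) := by
    intro u hu
    have hu' : (0:ℝ) < u := hu
    have hs1 : (0:ℝ) < 1 + y * u := by nlinarith
    have he : (fun ρ => auxF α y n ρ u)
        = fun ρ => Real.exp (-u) * (ρ ^ α * Real.exp (-((1 + y * u) * ρ)) * genLaguerre α n ρ) := by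
      funext ρ
      unfold auxF
      rw [show Real.exp (-((1 + y * u) * ρ)) = Real.exp (-ρ) * Real.exp (-(y * u * ρ)) from by
        rw [← Real.exp_add]; ring_nf]
      ring
    rw [he, MeasureTheory.integral_const_mul, laplace_laguerre hα n hs1,
      show (1 + y * u - 1 : ℝ) = y * u by ring]
    ring
  have swap := integral_integral_swap (auxF_integrable α y hα hy n)
  rw [step1, swap, setIntegral_congr_fun measurableSet_Ioi step3,
    MeasureTheory.integral_const_mul, KummerU]
  have hsub := integral_comp_mul_left_Ioi
    (fun t => Real.exp (-(1/y) * t) * t ^ ((n:ℝ) + 1 - 1) * (1 + t) ^ ((1 - α) - ((n:ℝ) + 1) - 1))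
    0 hy
  simp only [mul_zero, smul_eq_mul] at hsub
  have hval : ∀ u ∈ Ioi (0:ℝ),
      Real.exp (-(1/y) * (y * u)) * (y * u) ^ ((n:ℝ) + 1 - 1)
          * (1 + y * u) ^ ((1 - α) - ((n:ℝ) + 1) - 1)
        = Real.exp (-u) * ((y * u) ^ n * (1 + y * u) ^ (-(α + (n:ℝ) + 1))) := by
    intro u hu
    have h0 : -(1/y) * (y * u) = -u := by field_simp
    rw [h0, show ((n:ℝ) + 1 - 1) = ((n : ℕ) : ℝ) by ring, Real.rpow_natCast,
      show ((1 - α) - ((n:ℝ) + 1) - 1) = -(α + (n:ℝ) + 1) by ring, mul_assoc]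
  have hker : (∫ t in Ioi (0:ℝ), Real.exp (-(1/y) * t) * t ^ ((n:ℝ) + 1 - 1)
        * (1 + t) ^ ((1 - α) - ((n:ℝ) + 1) - 1))
      = y * ∫ u in Ioi (0:ℝ), Real.exp (-u) * ((y * u) ^ n * (1 + y * u) ^ (-(α + (n:ℝ) + 1))) := by
    rw [← setIntegral_congr_fun measurableSet_Ioi hval, hsub, ← mul_assoc,
      mul_inv_cancel₀ hy.ne', one_mul]
  rw [hker, Real.Gamma_nat_eq_factorial, show (↑n + α + 1 : ℝ) = α + n + 1 by ring]
  field_simp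
  ring_nf
  congr 1
  congr 1
  funext u
  ring
end

section
/- For real α > 0 and y > 0: Σ_{m=0}^∞ (m! / (α+1)_m) · I_{0,m}(y) = Γ(α+1) - α y · I_{0,0}(y), where I_{0,m}(y) = ∫_0^∞ (1+yρ)^{-1} ρ^α e^{-ρ} L_m^{(α)}(ρ) dρ and (α+1)_m is the Pochhammer symbol. -/
open MeasureTheory Real Set

lemma gamma_int {β s : ℝ} (hβ : 0 < β + 1) (hs : 0 < s) :
    ∫ ρ in Ioi (0:ℝ), ρ ^ β * Real.exp (-(s * ρ)) = Real.Gamma (β+1) / s ^ (β+1) := by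
  have h := Real.integral_rpow_mul_exp_neg_mul_Ioi hβ hs
  rw [show β + 1 - 1 = β by ring] at h
  rw [h, Real.div_rpow (by norm_num) hs.le, Real.one_rpow]
  field_simp

lemma gamma_int_integrable {β s : ℝ} (hβ : 0 < β + 1) (hs : 0 < s) :
    IntegrableOn (fun ρ : ℝ => ρ ^ β * Real.exp (-(s * ρ))) (Ioi 0) := by
  have h := integrableOn_rpow_mul_exp_neg_mul_rpow (p := 1) (by linarith : (-1:ℝ) < β) one_pos hs
  refine h.congr_fun (fun x hx => ?_) measurableSet_Ioi
  simp only [Real.rpow_one, neg_mul]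

lemma exp_swap {y β ρ t : ℝ} :
    ρ ^ β * Real.exp (-ρ) * Real.exp (-((1+y*ρ)*t))
      = Real.exp (-t) * (ρ ^ β * Real.exp (-((1+t*y)*ρ))) := by
  have h : Real.exp (-ρ) * Real.exp (-((1+y*ρ)*t)) = Real.exp (-t) * Real.exp (-((1+t*y)*ρ)) := by
    rw [← Real.exp_add, ← Real.exp_add]; ring_nf
  rw [mul_assoc, h]; ring

lemma J_rep {y : ℝ} (hy : 0 < y) {β : ℝ} (hβ : 0 < β + 1) :
    ∫ ρ in Ioi (0:ℝ), (1 + y*ρ)⁻¹ * ρ ^ β * Real.exp (-ρ)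
      = ∫ t in Ioi (0:ℝ), Real.exp (-t) * (Real.Gamma (β+1) / (1+t*y) ^ (β+1)) := by
  set F : ℝ → ℝ → ℝ := fun ρ t => ρ ^ β * Real.exp (-ρ) * Real.exp (-((1+y*ρ)*t)) with hF
  have hmeas : AEStronglyMeasurable (Function.uncurry F)
      ((volume.restrict (Ioi 0)).prod (volume.restrict (Ioi 0))) := by
    apply Measurable.aestronglyMeasurable
    fun_prop
  have hpos : ∀ ρ ∈ Ioi (0:ℝ), 0 < 1 + y * ρ := fun ρ hρ => by nlinarith [mem_Ioi.mp hρ]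
  have hFnn : ∀ ρ ∈ Ioi (0:ℝ), ∀ t : ℝ, 0 ≤ F ρ t := by
    intro ρ hρ t
    exact mul_nonneg (mul_nonneg (Real.rpow_nonneg (le_of_lt (mem_Ioi.mp hρ)) _)
      (Real.exp_nonneg _)) (Real.exp_nonneg _)
  have hinner : ∀ ρ ∈ Ioi (0:ℝ), ∫ t in Ioi (0:ℝ), F ρ t = (1 + y*ρ)⁻¹ * ρ ^ β * Real.exp (-ρ) := by
    intro ρ hρ
    have h0 : ∫ t in Ioi (0:ℝ), Real.exp (-((1+y*ρ)*t)) = (1+y*ρ)⁻¹ := by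
      have := gamma_int (β := 0) (s := 1 + y*ρ) (by norm_num) (hpos ρ hρ)
      simpa [Real.Gamma_one, Real.rpow_one, Real.rpow_zero, one_div] using this
    have : ∫ t in Ioi (0:ℝ), F ρ t
        = (ρ ^ β * Real.exp (-ρ)) * ∫ t in Ioi (0:ℝ), Real.exp (-((1+y*ρ)*t)) := by
      rw [← integral_const_mul]
    rw [this, h0]; ring
  have hint_t : ∀ ρ ∈ Ioi (0:ℝ), IntegrableOn (fun t => F ρ t) (Ioi 0) := by
    intro ρ hρ
    have h1 : IntegrableOn (fun t : ℝ => Real.exp (-(1+y*ρ) * t)) (Ioi 0) :=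
      exp_neg_integrableOn_Ioi 0 (hpos ρ hρ)
    have h2 := h1.const_mul (ρ ^ β * Real.exp (-ρ))
    refine IntegrableOn.congr_fun h2 (fun t ht => ?_) measurableSet_Ioi
    simp only [hF, neg_mul]
  have hintF : Integrable (Function.uncurry F)
      ((volume.restrict (Ioi 0)).prod (volume.restrict (Ioi 0))) := by
    rw [integrable_prod_iff hmeas]
    constructor
    · filter_upwards [ae_restrict_mem measurableSet_Ioi] with ρ hρ using hint_t ρ hρ
    · apply Integrable.mono' (gamma_int_integrable (s := 1) hβ one_pos)
        hmeas.norm.integral_prod_right'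
      filter_upwards [ae_restrict_mem measurableSet_Ioi] with ρ hρ
      have h1 : ∀ t : ℝ, ‖Function.uncurry F (ρ, t)‖ = F ρ t := by
        intro t
        rw [Function.uncurry_apply_pair, Real.norm_eq_abs, abs_of_nonneg (hFnn ρ hρ t)]
      rw [Real.norm_eq_abs, abs_of_nonneg]
      · simp_rw [h1]
        rw [hinner ρ hρ, one_mul]
        have h2 := hpos ρ hρ
        have h3 : (1 + y*ρ)⁻¹ ≤ 1 := by
          rw [inv_le_one_iff₀]; right; nlinarith [mem_Ioi.mp hρ]
        calc (1 + y*ρ)⁻¹ * ρ ^ β * Real.exp (-ρ) ≤ 1 * ρ ^ β * Real.exp (-ρ) := by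
              apply mul_le_mul_of_nonneg_right (mul_le_mul_of_nonneg_right h3
                (Real.rpow_nonneg (le_of_lt (mem_Ioi.mp hρ)) _)) (Real.exp_nonneg _)
          _ = ρ ^ β * Real.exp (-ρ) := by ring
      · exact integral_nonneg (fun t => norm_nonneg _)
  calc ∫ ρ in Ioi (0:ℝ), (1 + y*ρ)⁻¹ * ρ ^ β * Real.exp (-ρ)
      = ∫ ρ in Ioi (0:ℝ), ∫ t in Ioi (0:ℝ), F ρ t :=
        (setIntegral_congr_fun measurableSet_Ioi (fun ρ hρ => (hinner ρ hρ))).symm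
    _ = ∫ t in Ioi (0:ℝ), ∫ ρ in Ioi (0:ℝ), F ρ t := integral_integral_swap hintF
    _ = ∫ t in Ioi (0:ℝ), Real.exp (-t) * (Real.Gamma (β+1) / (1+t*y) ^ (β+1)) := by
        apply setIntegral_congr_fun measurableSet_Ioi
        intro t ht
        dsimp only
        have hst : 0 < 1 + t*y := by nlinarith [mem_Ioi.mp ht]
        have hFt : ∀ ρ ∈ Ioi (0:ℝ), F ρ t
            = Real.exp (-t) * (ρ ^ β * Real.exp (-((1+t*y)*ρ))) := fun ρ hρ => exp_swap
        rw [setIntegral_congr_fun measurableSet_Ioi hFt]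
        rw [integral_const_mul, gamma_int hβ hst]

lemma J_integrable {y β : ℝ} (hy : 0 < y) (hβ : 0 < β + 1) :
    IntegrableOn (fun ρ : ℝ => (1 + y*ρ)⁻¹ * ρ ^ β * Real.exp (-ρ)) (Ioi 0) := by
  apply Integrable.mono' (gamma_int_integrable (s := 1) hβ one_pos)
  · apply Measurable.aestronglyMeasurable; fun_prop
  · filter_upwards [ae_restrict_mem measurableSet_Ioi] with ρ hρ
    have hρ0 : (0:ℝ) < ρ := mem_Ioi.mp hρ
    have h2 : 0 < 1 + y * ρ := by nlinarith
    have h3 : (1 + y*ρ)⁻¹ ≤ 1 := by rw [inv_le_one_iff₀]; right; nlinarith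
    rw [Real.norm_eq_abs, abs_of_nonneg (by positivity), one_mul]
    calc (1 + y*ρ)⁻¹ * ρ ^ β * Real.exp (-ρ) ≤ 1 * ρ ^ β * Real.exp (-ρ) := by
          apply mul_le_mul_of_nonneg_right (mul_le_mul_of_nonneg_right h3
            (Real.rpow_nonneg hρ0.le _)) (Real.exp_nonneg _)
      _ = ρ ^ β * Real.exp (-ρ) := by ring

lemma K_integrable {y γ : ℝ} (hy : 0 < y) (hγ : 0 ≤ γ) (c : ℝ) :
    IntegrableOn (fun t : ℝ => Real.exp (-t) * (c / (1+t*y) ^ γ)) (Ioi 0) := by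
  have h1 : IntegrableOn (fun t : ℝ => Real.exp (-(1:ℝ) * t)) (Ioi 0) :=
    exp_neg_integrableOn_Ioi 0 one_pos
  apply Integrable.mono' (h1.const_mul |c|)
  · apply Measurable.aestronglyMeasurable; fun_prop
  · filter_upwards [ae_restrict_mem measurableSet_Ioi] with t ht
    have ht0 : (0:ℝ) < t := mem_Ioi.mp ht
    have h2 : (1:ℝ) ≤ 1 + t * y := by nlinarith
    have h3 : (1:ℝ) ≤ (1+t*y) ^ γ := Real.one_le_rpow h2 hγ
    rw [Real.norm_eq_abs, neg_one_mul, abs_mul, abs_div, Real.abs_exp,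
      abs_of_nonneg (by positivity : (0:ℝ) ≤ (1+t*y) ^ γ)]
    rw [mul_comm (|c|) (Real.exp (-t))]
    apply mul_le_mul_of_nonneg_left _ (Real.exp_nonneg _)
    rw [div_le_iff₀ (by positivity)]
    nlinarith [abs_nonneg c]

lemma key_sum {α : ℝ} (hα : 0 < α) {s : ℝ} (hs : 0 < s) (m : ℕ) :
    ∑ j ∈ Finset.range (m+1),
      ((-1:ℝ)^j * (Real.Gamma (α+m+1) / (Real.Gamma (α+j+1) * (Nat.factorial (m-j))))
          / (Nat.factorial j)) * (Real.Gamma (α+(j:ℝ)+1) / s ^ (α+(j:ℝ)+1))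
    = Real.Gamma (α+m+1) / (Nat.factorial m) * (((s-1)/s)^m * s ^ (-(α+1))) := by
  have key : ∀ j ∈ Finset.range (m+1),
      ((-1:ℝ)^j * (Real.Gamma (α+m+1) / (Real.Gamma (α+j+1) * (Nat.factorial (m-j))))
          / (Nat.factorial j)) * (Real.Gamma (α+(j:ℝ)+1) / s ^ (α+(j:ℝ)+1))
      = (Real.Gamma (α+m+1) / (Nat.factorial m) * s ^ (-(α+1)))
          * ((-s⁻¹)^j * (1:ℝ)^(m-j) * (m.choose j)) := by
    intro j hj
    have hjm : j ≤ m := Nat.lt_succ_iff.mp (Finset.mem_range.mp hj)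
    have hΓ : (0:ℝ) < Real.Gamma (α+j+1) := Real.Gamma_pos_of_pos (by positivity)
    have hsj : s ^ (α+(j:ℝ)+1) = s ^ (α+1) * s ^ (j:ℕ) := by
      rw [show α+(j:ℝ)+1 = (α+1)+(j:ℝ) by ring, Real.rpow_add hs, Real.rpow_natCast]
    have hneg : s ^ (-(α+1)) = (s ^ (α+1))⁻¹ := Real.rpow_neg hs.le _
    have hfact : (m.choose j : ℝ) * (Nat.factorial j) * (Nat.factorial (m-j))
        = (Nat.factorial m) := by
      exact_mod_cast congrArg (Nat.cast : ℕ → ℝ) (Nat.choose_mul_factorial_mul_factorial hjm)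
    have hs1 : (s:ℝ) ^ (α+1) ≠ 0 := by positivity
    have hs2 : (s:ℝ) ^ (j:ℕ) ≠ 0 := by positivity
    have hf1 : (Nat.factorial j : ℝ) ≠ 0 := by positivity
    have hf2 : (Nat.factorial (m-j) : ℝ) ≠ 0 := by positivity
    have hf3 : (Nat.factorial m : ℝ) ≠ 0 := by positivity
    have hnp : (-s⁻¹ : ℝ)^j = (-1)^j * (s^j)⁻¹ := by rw [neg_pow, inv_pow]
    have hc : (m.choose j : ℝ) ≠ 0 := by
      exact Nat.cast_ne_zero.mpr (Nat.choose_pos hjm).ne'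
    rw [hsj, hneg, one_pow, ← hfact, hnp]
    field_simp
  rw [Finset.sum_congr rfl key, ← Finset.mul_sum, ← add_pow]
  have : -s⁻¹ + 1 = (s-1)/s := by field_simp; ring
  rw [this]; ring

lemma genLaguerre_zero {α x : ℝ} (hα : 0 < α) : genLaguerre α 0 x = 1 := by
  have h : Real.Gamma (α + 0 + 1) ≠ 0 := (Real.Gamma_pos_of_pos (by positivity)).ne'
  simp [genLaguerre, Nat.factorial]
  simpa using h

lemma Imn_rep {α y : ℝ} (hα : 0 < α) (hy : 0 < y) (m : ℕ) :
    Imn α α y 0 m = Real.Gamma (α+m+1) / (Nat.factorial m) *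
      ∫ t in Ioi (0:ℝ), Real.exp (-t) * ((t*y/(1+t*y))^m * (1+t*y) ^ (-(α+1))) := by
  have hβ : ∀ j : ℕ, 0 < (α + (j:ℝ)) + 1 := fun j => by positivity
  set c : ℕ → ℝ := fun j => (-1:ℝ)^j * (Real.Gamma (α+m+1) /
      (Real.Gamma (α+j+1) * (Nat.factorial (m-j)))) / (Nat.factorial j) with hc
  have hpt : ∀ ρ ∈ Ioi (0:ℝ),
      (1 + y * ρ)⁻¹ * ρ ^ α * Real.exp (-ρ) * genLaguerre α 0 ρ * genLaguerre α m ρ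
      = ∑ j ∈ Finset.range (m+1),
          c j * ((1 + y*ρ)⁻¹ * ρ ^ (α + (j:ℝ)) * Real.exp (-ρ)) := by
    intro ρ hρ
    have hρ0 : (0:ℝ) < ρ := hρ
    rw [genLaguerre_zero hα, mul_one, genLaguerre, Finset.mul_sum]
    refine Finset.sum_congr rfl (fun j _ => ?_)
    rw [Real.rpow_add hρ0, Real.rpow_natCast, hc]
    ring
  rw [Imn, setIntegral_congr_fun measurableSet_Ioi hpt,
    integral_finset_sum _ (fun j _ => ((J_integrable hy (hβ j)).const_mul (c j)))]
  simp only [integral_const_mul]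
  rw [Finset.sum_congr rfl (fun j _ => by rw [J_rep hy (hβ j)])]
  rw [Finset.sum_congr rfl (fun j _ =>
    (integral_const_mul (c j) _).symm)]
  rw [← integral_finset_sum _ (fun j _ =>
    ((K_integrable hy (le_of_lt (hβ j)) (Real.Gamma ((α + (j:ℝ)) + 1))).const_mul (c j)))]
  rw [← integral_const_mul]
  apply setIntegral_congr_fun measurableSet_Ioi
  intro t ht
  dsimp only
  have ht0 : (0:ℝ) < t := ht
  have hs : (0:ℝ) < 1 + t*y := by nlinarith
  have h1 : ∀ j ∈ Finset.range (m+1),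
      c j * (Real.exp (-t) * (Real.Gamma ((α + (j:ℝ)) + 1) / (1+t*y) ^ ((α + (j:ℝ)) + 1)))
      = Real.exp (-t) * (c j * (Real.Gamma (α + (j:ℝ) + 1) / (1+t*y) ^ (α + (j:ℝ) + 1))) :=
    fun j _ => by ring
  rw [Finset.sum_congr rfl h1, ← Finset.mul_sum]
  have h2 := key_sum hα hs m
  simp only [hc]
  rw [h2, show (1 + t*y) - 1 = t*y by ring]
  ring

lemma h_integrable {y γ : ℝ} (hy : 0 < y) (hγ : 0 ≤ γ) :
    IntegrableOn (fun t : ℝ => Real.exp (-t) * (1+t*y) ^ (-γ)) (Ioi 0) := by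
  refine (K_integrable hy hγ 1).congr_fun (fun t ht => ?_) measurableSet_Ioi
  have h2 : (0:ℝ) < 1+t*y := by nlinarith [mem_Ioi.mp ht]
  rw [Real.rpow_neg h2.le]; simp only [one_div]

lemma ftc {α y : ℝ} (hα : 0 < α) (hy : 0 < y) :
    ∫ t in Ioi (0:ℝ), Real.exp (-t) * (1+t*y) ^ (-α)
      = 1 - α*y * ∫ t in Ioi (0:ℝ), Real.exp (-t) * (1+t*y) ^ (-(α+1)) := by
  set f : ℝ → ℝ := fun t => -(Real.exp (-t) * (1+t*y) ^ (-α)) with hf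
  set f' : ℝ → ℝ := fun t => Real.exp (-t) * (1+t*y) ^ (-α)
      + α*y*(Real.exp (-t) * (1+t*y) ^ (-(α+1))) with hf'
  have hint1 : IntegrableOn (fun t : ℝ => Real.exp (-t) * (1+t*y) ^ (-α)) (Ioi 0) :=
    h_integrable hy hα.le
  have hint2 : IntegrableOn (fun t : ℝ => Real.exp (-t) * (1+t*y) ^ (-(α+1))) (Ioi 0) :=
    h_integrable hy (by linarith)
  have hderiv : ∀ t ∈ Ici (0:ℝ), HasDerivAt f (f' t) t := by
    intro t ht
    have ht0 : (0:ℝ) ≤ t := ht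
    have hu : (0:ℝ) < 1 + t*y := by nlinarith
    have h1 : HasDerivAt (fun t : ℝ => Real.exp (-t)) (-Real.exp (-t)) t := by
      simpa using (hasDerivAt_neg t).exp
    have h2 : HasDerivAt (fun t : ℝ => 1 + t*y) y t := by
      simpa using ((hasDerivAt_id t).mul_const y).const_add 1
    have h3 : HasDerivAt (fun t : ℝ => (1+t*y) ^ (-α)) ((-α) * (1+t*y) ^ (-α-1) * y) t :=
      (h2.rpow_const (p := -α) (Or.inl hu.ne')).congr_deriv (by ring)
    have h4 := (h1.mul h3).neg
    refine h4.congr_deriv ?_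
    rw [hf', show -α-1 = -(α+1) by ring]
    ring
  have htend : Filter.Tendsto f Filter.atTop (nhds 0) := by
    refine squeeze_zero_norm' ?_ Real.tendsto_exp_neg_atTop_nhds_zero
    · filter_upwards [Filter.eventually_ge_atTop (0:ℝ)] with t ht
      have hu : (1:ℝ) ≤ 1 + t*y := by nlinarith
      have hle : (1+t*y) ^ (-α) ≤ 1 :=
        Real.rpow_le_one_of_one_le_of_nonpos hu (by linarith)
      rw [hf]
      simp only [norm_neg, Real.norm_eq_abs]
      rw [abs_of_nonneg (by positivity)]
      calc Real.exp (-t) * (1+t*y) ^ (-α) ≤ Real.exp (-t) * 1 :=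
            mul_le_mul_of_nonneg_left hle (Real.exp_nonneg _)
        _ = Real.exp (-t) := mul_one _
  have hfint : IntegrableOn f' (Ioi 0) := by
    rw [hf']
    exact hint1.add (IntegrableOn.congr_fun (hint2.const_mul (α*y)) (fun t _ => rfl) measurableSet_Ioi)
  have hFTC := integral_Ioi_of_hasDerivAt_of_tendsto' hderiv hfint htend
  have hf0 : f 0 = -1 := by
    rw [hf]; simp
  rw [hf0] at hFTC
  have hsplit : ∫ t in Ioi (0:ℝ), f' t
      = (∫ t in Ioi (0:ℝ), Real.exp (-t) * (1+t*y) ^ (-α))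
        + α*y * ∫ t in Ioi (0:ℝ), Real.exp (-t) * (1+t*y) ^ (-(α+1)) := by
    rw [hf', integral_add hint1 (hint2.const_mul (α*y)), integral_const_mul]
  rw [hsplit] at hFTC
  linarith

theorem Imn_sum_single (α y : ℝ) (hα : 0 < α) (hy : 0 < y) :
    (∑' m : ℕ, ((Nat.factorial m : ℝ) * Real.Gamma (α + 1) / Real.Gamma (α + 1 + m)) *
        Imn α α y 0 m) =
      Real.Gamma (α + 1) - α * y * Imn α α y 0 0 := by
  set g : ℕ → ℝ → ℝ :=
    fun m t => Real.exp (-t) * ((t*y/(1+t*y))^m * (1+t*y) ^ (-(α+1))) with hg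
  set h : ℝ → ℝ := fun t => Real.exp (-t) * (1+t*y) ^ (-α) with hh
  have hgnn : ∀ (m : ℕ), ∀ t ∈ Ioi (0:ℝ), 0 ≤ g m t := by
    intro m t ht
    have ht0 : (0:ℝ) < t := ht
    have hs : (0:ℝ) < 1 + t*y := by nlinarith
    have hr0 : 0 ≤ t*y/(1+t*y) := by positivity
    simp only [hg]
    exact mul_nonneg (Real.exp_nonneg _)
      (mul_nonneg (pow_nonneg hr0 m) (Real.rpow_nonneg hs.le _))
  have hsum : ∀ t ∈ Ioi (0:ℝ), HasSum (fun m => g m t) (h t) := by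
    intro t ht
    have ht0 : (0:ℝ) < t := ht
    have hs : (0:ℝ) < 1 + t*y := by nlinarith
    have hr0 : 0 ≤ t*y/(1+t*y) := by positivity
    have hr1 : t*y/(1+t*y) < 1 := by rw [div_lt_one hs]; nlinarith
    have h1 := (hasSum_geometric_of_lt_one hr0 hr1).mul_left
      (Real.exp (-t) * (1+t*y) ^ (-(α+1)))
    have hfun : (fun m : ℕ => Real.exp (-t) * (1+t*y) ^ (-(α+1)) * (t*y/(1+t*y))^m)
        = fun m => g m t := by
      funext m; simp only [hg]; ring
    rw [hfun] at h1
    suffices hh' : h t = Real.exp (-t) * (1+t*y) ^ (-(α+1)) * (1 - t*y/(1+t*y))⁻¹ by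
      rw [hh']; exact h1
    have h2 : (1 - t*y/(1+t*y))⁻¹ = 1 + t*y := by
      rw [show 1 - t*y/(1+t*y) = (1+t*y)⁻¹ by field_simp; ring, inv_inv]
    rw [h2]
    have h3 : (1+t*y) ^ (-(α+1)) * (1+t*y) = (1+t*y) ^ (-α) := by
      nth_rewrite 2 [show (1+t*y) = (1+t*y) ^ (1:ℝ) from (Real.rpow_one _).symm]
      rw [← Real.rpow_add hs]; norm_num
    simp only [hh]
    rw [← h3]; ring
  have hmeas : ∀ m : ℕ, AEStronglyMeasurable (g m) (volume.restrict (Ioi 0)) := by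
    intro m; apply Measurable.aestronglyMeasurable
    simp only [hg]; fun_prop
  have hint_h : IntegrableOn h (Ioi 0) := h_integrable hy hα.le
  have hint_k : IntegrableOn (fun t : ℝ => Real.exp (-t) * (1+t*y) ^ (-(α+1))) (Ioi 0) :=
    h_integrable hy (by linarith)
  have hf' : ∑' m : ℕ, ∫⁻ t, ‖g m t‖ₑ ∂(volume.restrict (Ioi 0)) ≠ ⊤ := by
    rw [← MeasureTheory.lintegral_tsum (fun m => (hmeas m).enorm)]
    have hae : ∀ᵐ t ∂(volume.restrict (Ioi (0:ℝ))),
        (∑' m : ℕ, ‖g m t‖ₑ) = ‖h t‖ₑ := by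
      filter_upwards [ae_restrict_mem measurableSet_Ioi] with t ht
      have h1 : ∀ m : ℕ, ‖g m t‖ₑ = ENNReal.ofReal (g m t) := fun m =>
        Real.enorm_eq_ofReal (hgnn m t ht)
      simp_rw [h1]
      have hhnn : 0 ≤ h t := by
        have ht0 : (0:ℝ) < t := ht
        have hs : (0:ℝ) < 1 + t*y := by nlinarith
        simp only [hh]
        exact mul_nonneg (Real.exp_nonneg _) (Real.rpow_nonneg hs.le _)
      rw [← ENNReal.ofReal_tsum_of_nonneg (fun m => hgnn m t ht) (hsum t ht).summable,
        (hsum t ht).tsum_eq, Real.enorm_eq_ofReal hhnn]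
    rw [lintegral_congr_ae hae]
    exact hint_h.2.ne
  have hswap : ∑' m : ℕ, ∫ t in Ioi (0:ℝ), g m t = ∫ t in Ioi (0:ℝ), h t := by
    rw [← MeasureTheory.integral_tsum hmeas hf']
    exact setIntegral_congr_fun measurableSet_Ioi (fun t ht => (hsum t ht).tsum_eq)
  have hterm : ∀ m : ℕ, ((Nat.factorial m : ℝ) * Real.Gamma (α + 1) / Real.Gamma (α + 1 + m))
        * Imn α α y 0 m
      = Real.Gamma (α+1) * ∫ t in Ioi (0:ℝ), g m t := by
    intro m
    rw [Imn_rep hα hy m, show α + 1 + (m:ℝ) = α + m + 1 by ring]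
    have h1 : Real.Gamma (α + (m:ℝ) + 1) ≠ 0 := (Real.Gamma_pos_of_pos (by positivity)).ne'
    have h2 : (Nat.factorial m : ℝ) ≠ 0 := by positivity
    simp only [hg]
    field_simp
    congr 1; funext t; ring
  have hI0 : Imn α α y 0 0
      = Real.Gamma (α+1) * ∫ t in Ioi (0:ℝ), Real.exp (-t) * (1+t*y) ^ (-(α+1)) := by
    rw [Imn_rep hα hy 0]
    simp only [Nat.cast_zero, add_zero, Nat.factorial_zero, Nat.cast_one, div_one,
      pow_zero, one_mul]
  calc (∑' m : ℕ, ((Nat.factorial m : ℝ) * Real.Gamma (α + 1) / Real.Gamma (α + 1 + m)) *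
          Imn α α y 0 m)
      = ∑' m : ℕ, Real.Gamma (α+1) * ∫ t in Ioi (0:ℝ), g m t := tsum_congr hterm
    _ = Real.Gamma (α+1) * ∑' m : ℕ, ∫ t in Ioi (0:ℝ), g m t := tsum_mul_left
    _ = Real.Gamma (α+1) * ∫ t in Ioi (0:ℝ), h t := by rw [hswap]
    _ = Real.Gamma (α+1) *
          (1 - α*y * ∫ t in Ioi (0:ℝ), Real.exp (-t) * (1+t*y) ^ (-(α+1))) := by
        simp only [hh]
        rw [ftc hα hy]
    _ = Real.Gamma (α + 1) - α * y * Imn α α y 0 0 := by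
        rw [hI0]; ring
end

section
/- For real α > -1, y > 0, and n ≥ 1: the polynomial f_n(ρ) = L_n^{(α)}(ρ) - (I_{n,0}/I_{n-1,0}) L_{n-1}^{(α)}(ρ) satisfies f_n(-1/y) = (1/I_{n-1,0}) · (1/y) · Γ(α+n)/n!. -/
open MeasureTheory Real Set

/-- The orthogonal polynomials for the weight (1+yρ)⁻¹ ρ^α e^(-ρ). -/
noncomputable def fpoly (α y : ℝ) (n : ℕ) (ρ : ℝ) : ℝ :=
  if n = 0 then 1
  else genLaguerre α n ρ -
    (Imn α α y n 0 / Imn α α y (n - 1) 0) * genLaguerre α (n - 1) ρ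

noncomputable def lagCoef (α : ℝ) (m j : ℕ) : ℝ :=
  (-1 : ℝ) ^ j * (Real.Gamma (α + m + 1) /
    (Real.Gamma (α + j + 1) * (Nat.factorial (m - j)))) / (Nat.factorial j)

lemma genLaguerre_eq (α : ℝ) (m : ℕ) (x : ℝ) :
    genLaguerre α m x = ∑ j ∈ Finset.range (m + 1), lagCoef α m j * x ^ j := by
  unfold genLaguerre lagCoef
  refine Finset.sum_congr rfl fun j _ => by ring

lemma gpos {α : ℝ} (hα : -1 < α) (j : ℕ) : 0 < Real.Gamma (α + j + 1) :=
  Real.Gamma_pos_of_pos (by have : (0:ℝ) ≤ j := Nat.cast_nonneg j; linarith)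

lemma lag_zero {α : ℝ} (hα : -1 < α) (x : ℝ) : genLaguerre α 0 x = 1 := by
  have h0 : Real.Gamma (α + 1) ≠ 0 := by
    have := gpos hα 0; simpa using this.ne'
  rw [genLaguerre]
  simp [Finset.sum_range_one]
  field_simp
  exact h0

lemma lag_one {α : ℝ} (hα : -1 < α) (x : ℝ) : genLaguerre α 1 x = α + 1 - x := by
  have hA : α + 1 ≠ 0 := by linarith
  have h0 : Real.Gamma (α + 1) ≠ 0 := (Real.Gamma_pos_of_pos (by linarith)).ne'
  rw [genLaguerre, Finset.sum_range_succ, Finset.sum_range_one]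
  simp only [Nat.cast_zero, Nat.cast_one, add_zero, Nat.factorial, pow_zero, pow_one,
    Nat.cast_ofNat, Nat.sub_self]
  rw [Real.Gamma_add_one hA]
  field_simp
  ring

lemma gam1 {α : ℝ} (hα : -1 < α) (k : ℕ) :
    Real.Gamma (α + ((k+1:ℕ):ℝ) + 1) = (α + k + 1) * Real.Gamma (α + (k:ℕ) + 1) := by
  have hs : α + (k:ℝ) + 1 ≠ 0 := by have : (0:ℝ) ≤ k := Nat.cast_nonneg k; intro h; linarith [h]
  rw [show α + ((k+1:ℕ):ℝ) + 1 = (α + (k:ℕ) + 1) + 1 by push_cast; ring,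
    Real.Gamma_add_one hs]

lemma gam2 {α : ℝ} (hα : -1 < α) (k : ℕ) :
    Real.Gamma (α + ((k+2:ℕ):ℝ) + 1)
      = (α + k + 2) * ((α + k + 1) * Real.Gamma (α + (k:ℕ) + 1)) := by
  have h := gam1 hα (k+1)
  rw [show ((k+1+1:ℕ):ℝ) = ((k+2:ℕ):ℝ) by norm_cast] at h
  rw [h, gam1 hα k]
  push_cast; ring

lemma factS (k : ℕ) : (((k+1).factorial:ℕ):ℝ) = ((k:ℝ)+1) * ((k.factorial:ℕ):ℝ) := by
  rw [Nat.factorial_succ]; push_cast; ring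

lemma coef_top {α : ℝ} (hα : -1 < α) (k : ℕ) :
    ((k:ℝ)+2) * lagCoef α (k+2) (k+2) + lagCoef α (k+1) (k+1) = 0 := by
  unfold lagCoef
  rw [Nat.sub_self, Nat.sub_self]
  have g1 : Real.Gamma (α + ((k+2:ℕ):ℝ) + 1) ≠ 0 := (gpos hα _).ne'
  have g2 : Real.Gamma (α + ((k+1:ℕ):ℝ) + 1) ≠ 0 := (gpos hα _).ne'
  have f2 : (((k+1).factorial:ℕ):ℝ) ≠ 0 := Nat.cast_ne_zero.mpr (Nat.factorial_ne_zero _)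
  set G1 := Real.Gamma (α + ((k+2:ℕ):ℝ) + 1) with hG1
  set G2 := Real.Gamma (α + ((k+1:ℕ):ℝ) + 1) with hG2
  rw [factS (k+1), factS k]
  rw [pow_succ, pow_succ]
  have h1 : ((k:ℝ)+1) ≠ 0 := by positivity
  have h2 : ((k:ℝ)+1+1) ≠ 0 := by positivity
  have fk : ((k.factorial:ℕ):ℝ) ≠ 0 := Nat.cast_ne_zero.mpr (Nat.factorial_ne_zero _)
  field_simp
  push_cast; ring

lemma coef_k1 {α : ℝ} (hα : -1 < α) (k : ℕ) :
    ((k:ℝ)+2) * lagCoef α (k+2) (k+1) + lagCoef α (k+1) k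
      = (2*(k:ℝ)+α+3) * lagCoef α (k+1) (k+1) := by
  unfold lagCoef
  rw [show k+2-(k+1) = 1 by omega, show k+1-(k+1) = 0 by omega, show k+1-k = 1 by omega]
  have gk : Real.Gamma (α + (k:ℕ) + 1) ≠ 0 := (gpos hα k).ne'
  rw [gam1 hα k, gam2 hα k]
  rw [factS k]
  rw [pow_succ]
  set G := Real.Gamma (α + (k:ℝ) + 1) with hG
  have hk1 : (0:ℝ) < α + k + 1 := by have : (0:ℝ) ≤ k := Nat.cast_nonneg k; linarith
  have hk1' : (α + (k:ℝ) + 1) ≠ 0 := hk1.ne'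
  have h1 : ((k:ℝ)+1) ≠ 0 := by positivity
  have fk : ((k.factorial:ℕ):ℝ) ≠ 0 := Nat.cast_ne_zero.mpr (Nat.factorial_ne_zero _)
  simp only [Nat.factorial_one, Nat.factorial_zero, Nat.cast_one]
  field_simp
  ring

lemma coef_mid0 {α : ℝ} (hα : -1 < α) (k : ℕ) :
    ((k:ℝ)+2) * lagCoef α (k+2) 0
      = (2*(k:ℝ)+α+3) * lagCoef α (k+1) 0 - ((k:ℝ)+1+α) * lagCoef α k 0 := by
  unfold lagCoef
  simp only [Nat.sub_zero, pow_zero, one_mul, Nat.factorial_zero, Nat.cast_one, div_one]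
  have g0 : Real.Gamma (α + ((0:ℕ):ℝ) + 1) ≠ 0 := (gpos hα 0).ne'
  have gk : Real.Gamma (α + (k:ℕ) + 1) ≠ 0 := (gpos hα k).ne'
  rw [gam1 hα k, gam2 hα k, factS (k+1), factS k]
  set G := Real.Gamma (α + (k:ℝ) + 1) with hG
  set G0 := Real.Gamma (α + ((0:ℕ):ℝ) + 1) with hG0
  push_cast
  have h1 : ((k:ℝ)+1) ≠ 0 := by positivity
  have h2 : ((k:ℝ)+1+1) ≠ 0 := by positivity
  have fk : ((k.factorial:ℕ):ℝ) ≠ 0 := Nat.cast_ne_zero.mpr (Nat.factorial_ne_zero _)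
  field_simp
  ring

lemma coef_midS {α : ℝ} (hα : -1 < α) (i d : ℕ) :
    ((i:ℝ)+(d:ℝ)+3) * lagCoef α (i+1+d+2) (i+1) + lagCoef α (i+1+d+1) i
      = (2*((i:ℝ)+(d:ℝ)+1)+α+3) * lagCoef α (i+1+d+1) (i+1)
        - ((i:ℝ)+(d:ℝ)+2+α) * lagCoef α (i+1+d) (i+1) := by
  unfold lagCoef
  rw [show i+1+d+2-(i+1) = d+2 by omega, show i+1+d+1-(i+1) = d+1 by omega,
    show i+1+d-(i+1) = d by omega, show i+1+d+1-i = d+2 by omega]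
  have gi : Real.Gamma (α + (i:ℕ) + 1) ≠ 0 := (gpos hα i).ne'
  have gK : Real.Gamma (α + ((i+1+d:ℕ):ℝ) + 1) ≠ 0 := (gpos hα _).ne'
  have eK1 := gam1 hα (i+1+d)
  have eK2 := gam2 hα (i+1+d)
  rw [show (i+1+d)+1 = i+1+d+1 by omega] at eK1
  rw [show (i+1+d)+2 = i+1+d+2 by omega] at eK2
  rw [eK1, eK2, gam1 hα i, factS (d+1), factS d, factS i]
  rw [pow_succ]
  set GK := Real.Gamma (α + ((i+1+d:ℕ):ℝ) + 1) with hGK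
  set Gi := Real.Gamma (α + (i:ℝ) + 1) with hGi
  have hi1 : (0:ℝ) < α + i + 1 := by have : (0:ℝ) ≤ i := Nat.cast_nonneg i; linarith
  have hi1' : (α + (i:ℝ) + 1) ≠ 0 := hi1.ne'
  have hd1 : ((d:ℝ)+1) ≠ 0 := by positivity
  have hd2 : ((d:ℝ)+1+1) ≠ 0 := by positivity
  have hi1n : ((i:ℝ)+1) ≠ 0 := by positivity
  have fd : ((d.factorial:ℕ):ℝ) ≠ 0 := Nat.cast_ne_zero.mpr (Nat.factorial_ne_zero _)
  have fi : ((i.factorial:ℕ):ℝ) ≠ 0 := Nat.cast_ne_zero.mpr (Nat.factorial_ne_zero _)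
  push_cast
  field_simp
  ring

lemma lag_rec {α : ℝ} (hα : -1 < α) (k : ℕ) (x : ℝ) :
    ((k:ℝ)+2) * genLaguerre α (k+2) x
      = (2*(k:ℝ)+α+3-x) * genLaguerre α (k+1) x - ((k:ℝ)+1+α) * genLaguerre α k x := by
  set g : ℕ → ℝ := fun j => match j with | 0 => (0:ℝ) | (j+1) => lagCoef α (k+1) j with hgdef
  have hx : x * genLaguerre α (k+1) x = ∑ j ∈ Finset.range (k+2+1), g j * x ^ j := by
    rw [genLaguerre_eq, Finset.mul_sum]
    conv_rhs => rw [Finset.sum_range_succ']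
    simp only [g, pow_zero, mul_one, mul_zero, add_zero]
    exact Finset.sum_congr rfl fun j _ => by ring
  have e2 : ((k:ℝ)+2) * genLaguerre α (k+2) x
      = ∑ j ∈ Finset.range (k+2+1), (((k:ℝ)+2) * lagCoef α (k+2) j) * x ^ j := by
    rw [genLaguerre_eq, Finset.mul_sum]; exact Finset.sum_congr rfl fun j _ => by ring
  have e1 : (2*(k:ℝ)+α+3) * genLaguerre α (k+1) x
      = ∑ j ∈ Finset.range (k+1+1), ((2*(k:ℝ)+α+3) * lagCoef α (k+1) j) * x ^ j := by
    rw [genLaguerre_eq, Finset.mul_sum]; exact Finset.sum_congr rfl fun j _ => by ring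
  have e0 : ((k:ℝ)+1+α) * genLaguerre α k x
      = ∑ j ∈ Finset.range (k+1), (((k:ℝ)+1+α) * lagCoef α k j) * x ^ j := by
    rw [genLaguerre_eq, Finset.mul_sum]; exact Finset.sum_congr rfl fun j _ => by ring
  have hsplit : (2*(k:ℝ)+α+3-x) * genLaguerre α (k+1) x
      = (2*(k:ℝ)+α+3) * genLaguerre α (k+1) x - x * genLaguerre α (k+1) x := by ring
  rw [hsplit, e2, e1, e0, hx]
  -- peel boundary terms
  rw [Finset.sum_range_succ (f := fun j => (((k:ℝ)+2) * lagCoef α (k+2) j) * x ^ j) (k+2),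
    Finset.sum_range_succ (f := fun j => (((k:ℝ)+2) * lagCoef α (k+2) j) * x ^ j) (k+1),
    Finset.sum_range_succ (f := fun j => ((2*(k:ℝ)+α+3) * lagCoef α (k+1) j) * x ^ j) (k+1),
    Finset.sum_range_succ (f := fun j => g j * x ^ j) (k+2),
    Finset.sum_range_succ (f := fun j => g j * x ^ j) (k+1)]
  have hmid : ∑ j ∈ Finset.range (k+1), (((k:ℝ)+2) * lagCoef α (k+2) j) * x ^ j
      = ∑ j ∈ Finset.range (k+1), (((2*(k:ℝ)+α+3) * lagCoef α (k+1) j) * x ^ j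
          - g j * x ^ j - (((k:ℝ)+1+α) * lagCoef α k j) * x ^ j) := by
    refine Finset.sum_congr rfl fun j hj => ?_
    have hjk : j ≤ k := by simpa using Nat.lt_succ_iff.mp (Finset.mem_range.mp hj)
    have hco : (((k:ℝ)+2) * lagCoef α (k+2) j) + g j
        = ((2*(k:ℝ)+α+3) * lagCoef α (k+1) j) - (((k:ℝ)+1+α) * lagCoef α k j) := by
      match j with
      | 0 =>
        simpa [g] using coef_mid0 hα k
      | (i+1) =>
        obtain ⟨d, rfl⟩ : ∃ d, k = i+1+d := ⟨k-(i+1), by omega⟩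
        have h := coef_midS hα i d
        simp only [g]
        push_cast
        push_cast at h
        linarith [h]
    calc (((k:ℝ)+2) * lagCoef α (k+2) j) * x ^ j
        = ((((k:ℝ)+2) * lagCoef α (k+2) j) + g j) * x ^ j - g j * x ^ j := by ring
      _ = (((2*(k:ℝ)+α+3) * lagCoef α (k+1) j) - (((k:ℝ)+1+α) * lagCoef α k j)) * x ^ j
            - g j * x ^ j := by rw [hco]
      _ = _ := by ring
  rw [hmid, Finset.sum_sub_distrib, Finset.sum_sub_distrib]
  have hb1 : (((k:ℝ)+2) * lagCoef α (k+2) (k+1)) * x ^ (k+1) + g (k+1) * x ^ (k+1)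
      = ((2*(k:ℝ)+α+3) * lagCoef α (k+1) (k+1)) * x ^ (k+1) := by
    have := coef_k1 hα k
    simp only [g]
    linear_combination (x ^ (k+1)) * this
  have hb2 : (((k:ℝ)+2) * lagCoef α (k+2) (k+2)) * x ^ (k+2) + g (k+2) * x ^ (k+2) = 0 := by
    have := coef_top hα k
    simp only [g]
    linear_combination (x ^ (k+2)) * this
  simp only [g] at hb1 hb2 ⊢
  linarith [hb1, hb2]

noncomputable def cdS (α : ℝ) (n : ℕ) (x t : ℝ) : ℝ :=
  ∑ k ∈ Finset.range n,
    ((k.factorial : ℝ) / Real.Gamma (α + k + 1)) * genLaguerre α k x * genLaguerre α k t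

lemma cd {α : ℝ} (hα : -1 < α) (n : ℕ) (x t : ℝ) :
    (x - t) * cdS α (n+1) x t
      = (((n+1).factorial : ℝ) / Real.Gamma (α + (n:ℕ) + 1))
          * (genLaguerre α n x * genLaguerre α (n+1) t
              - genLaguerre α (n+1) x * genLaguerre α n t) := by
  induction n with
  | zero =>
    unfold cdS
    rw [Finset.sum_range_one]
    simp only [Nat.cast_zero, Nat.factorial_zero, Nat.factorial_one, Nat.cast_one, add_zero]
    rw [lag_zero hα, lag_zero hα, lag_one hα, lag_one hα]
    simp [Nat.factorial_one]
    ring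
  | succ n IH =>
    have hS : cdS α (n+1+1) x t = cdS α (n+1) x t
        + (((n+1).factorial : ℝ) / Real.Gamma (α + ((n+1:ℕ):ℝ) + 1))
            * genLaguerre α (n+1) x * genLaguerre α (n+1) t := by
      unfold cdS
      rw [Finset.sum_range_succ]
    have rx := lag_rec hα n x
    have rt := lag_rec hα n t
    have hg := gam1 hα n
    have hfact : (((n+1+1).factorial:ℕ):ℝ) = ((n:ℝ)+1+1) * (((n+1).factorial:ℕ):ℝ) := by
      rw [factS (n+1)]; push_cast; ring
    have gk : Real.Gamma (α + (n:ℕ) + 1) ≠ 0 := (gpos hα n).ne'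
    have hk1 : α + (n:ℝ) + 1 ≠ 0 := by
      have : (0:ℝ) ≤ n := Nat.cast_nonneg n; intro h; linarith
    rw [hS, hfact, hg]
    rw [show (n+1+1) = (n+2) from rfl]
    field_simp at IH
    field_simp
    linear_combination ((α + (n:ℝ) + 1)) * IH
      + ((((n+1).factorial:ℕ):ℝ) * genLaguerre α (n+1) t) * rx
      - ((((n+1).factorial:ℕ):ℝ) * genLaguerre α (n+1) x) * rt

lemma integrable_weight_pow {α : ℝ} (hα : -1 < α) (k : ℕ) :
    IntegrableOn (fun ρ : ℝ => ρ ^ α * Real.exp (-ρ) * ρ ^ k) (Ioi (0:ℝ)) := by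
  have hpos : (0:ℝ) < α + k + 1 := by have : (0:ℝ) ≤ k := Nat.cast_nonneg k; linarith
  have h := Real.GammaIntegral_convergent hpos
  refine h.congr_fun (fun x hx => ?_) measurableSet_Ioi
  have hx0 : (0:ℝ) < x := hx
  beta_reduce
  rw [show α + (k:ℝ) + 1 - 1 = α + k by ring, Real.rpow_add hx0, Real.rpow_natCast]
  ring

lemma moment {α : ℝ} (hα : -1 < α) (k : ℕ) :
    ∫ ρ in Ioi (0:ℝ), ρ ^ α * Real.exp (-ρ) * ρ ^ k = Real.Gamma (α + k + 1) := by
  have hpos : (0:ℝ) < α + k + 1 := by have : (0:ℝ) ≤ k := Nat.cast_nonneg k; linarith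
  rw [Real.Gamma_eq_integral hpos]
  refine setIntegral_congr_fun measurableSet_Ioi (fun x hx => ?_)
  have hx0 : (0:ℝ) < x := hx
  rw [show α + (k:ℝ) + 1 - 1 = α + k by ring, Real.rpow_add hx0, Real.rpow_natCast]
  ring

lemma weight_lag_expand {α : ℝ} (m : ℕ) :
    (fun ρ : ℝ => ρ ^ α * Real.exp (-ρ) * genLaguerre α m ρ)
      = fun ρ : ℝ => ∑ j ∈ Finset.range (m+1),
          lagCoef α m j * (ρ ^ α * Real.exp (-ρ) * ρ ^ j) := by
  funext ρ
  rw [genLaguerre_eq, Finset.mul_sum]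
  exact Finset.sum_congr rfl fun j _ => by ring

lemma integrable_weight_lag {α : ℝ} (hα : -1 < α) (m : ℕ) :
    IntegrableOn (fun ρ : ℝ => ρ ^ α * Real.exp (-ρ) * genLaguerre α m ρ) (Ioi (0:ℝ)) := by
  rw [weight_lag_expand]
  exact integrable_finset_sum _ fun j _ => ((integrable_weight_pow hα j).const_mul _)

lemma intL {α : ℝ} (hα : -1 < α) (k : ℕ) :
    ∫ ρ in Ioi (0:ℝ), ρ ^ α * Real.exp (-ρ) * genLaguerre α k ρ
      = if k = 0 then Real.Gamma (α + 1) else 0 := by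
  rw [weight_lag_expand]
  rw [MeasureTheory.integral_finset_sum _
    (fun j _ => ((integrable_weight_pow hα j).const_mul _))]
  have hmom : ∀ j, ∫ ρ in Ioi (0:ℝ), lagCoef α k j * (ρ ^ α * Real.exp (-ρ) * ρ ^ j)
      = lagCoef α k j * Real.Gamma (α + j + 1) := by
    intro j
    rw [MeasureTheory.integral_const_mul, moment hα]
  simp_rw [hmom]
  have hterm : ∀ j ∈ Finset.range (k+1),
      lagCoef α k j * Real.Gamma (α + j + 1)
        = (Real.Gamma (α + k + 1) / (k.factorial : ℝ)) * ((-1:ℝ)^j * (k.choose j)) := by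
    intro j hj
    have hjk : j ≤ k := Nat.lt_succ_iff.mp (Finset.mem_range.mp hj)
    have hcf : ((k.choose j : ℝ)) * (j.factorial : ℝ) * ((k-j).factorial : ℝ)
        = (k.factorial : ℝ) := by
      exact_mod_cast congrArg (Nat.cast (R := ℝ))
        (Nat.choose_mul_factorial_mul_factorial hjk)
    have hG : Real.Gamma (α + j + 1) ≠ 0 := (gpos hα j).ne'
    have hf1 : ((j.factorial:ℕ):ℝ) ≠ 0 := Nat.cast_ne_zero.mpr (Nat.factorial_ne_zero _)
    have hf2 : (((k-j).factorial:ℕ):ℝ) ≠ 0 := Nat.cast_ne_zero.mpr (Nat.factorial_ne_zero _)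
    have hf3 : ((k.factorial:ℕ):ℝ) ≠ 0 := Nat.cast_ne_zero.mpr (Nat.factorial_ne_zero _)
    unfold lagCoef
    field_simp
    linear_combination (-Real.Gamma (α + (k:ℝ) + 1)) * hcf
  rw [Finset.sum_congr rfl hterm, ← Finset.mul_sum]
  have hR : ∑ i ∈ Finset.range (k+1), ((-1:ℝ))^i * (k.choose i)
      = if k = 0 then 1 else 0 := by
    have h := Int.alternating_sum_range_choose (n := k)
    have h2 := congrArg (fun z : ℤ => (z : ℝ)) h
    push_cast at h2
    simpa [apply_ite] using h2
  rw [hR]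
  rcases Nat.eq_zero_or_pos k with hk | hk
  · subst hk
    have hG : Real.Gamma (α + 1) ≠ 0 := by
      have := gpos hα 0; simpa using this.ne'
    simp [Nat.factorial_zero]
    try field_simp
  · rw [if_neg (by omega), if_neg (by omega), mul_zero]

lemma integrable_w_pow {α y : ℝ} (hα : -1 < α) (hy : 0 < y) (k : ℕ) :
    IntegrableOn (fun ρ : ℝ => (1 + y * ρ)⁻¹ * (ρ ^ α * Real.exp (-ρ) * ρ ^ k))
      (Ioi (0:ℝ)) := by
  have hbase := integrable_weight_pow hα k
  refine Integrable.mono' hbase.abs ?_ ?_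
  · -- measurability via continuity on Ioi 0
    have hcont : ContinuousOn
        (fun ρ : ℝ => (1 + y * ρ)⁻¹ * (ρ ^ α * Real.exp (-ρ) * ρ ^ k)) (Ioi 0) := by
      apply ContinuousOn.mul
      · apply ContinuousOn.inv₀
        · exact (continuous_const.add (continuous_const.mul continuous_id)).continuousOn
        · intro x hx
          have : (0:ℝ) < x := hx
          nlinarith
      · apply ContinuousOn.mul
        · apply ContinuousOn.mul
          · intro x hx
            exact (Real.continuousAt_rpow_const x α (Or.inl (ne_of_gt hx))).continuousWithinAt
          · exact (Real.continuous_exp.comp continuous_neg).continuousOn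
        · exact (continuous_pow k).continuousOn
    exact hcont.aestronglyMeasurable measurableSet_Ioi
  · rw [ae_restrict_iff' measurableSet_Ioi]
    filter_upwards with x
    intro hx
    have hx0 : (0:ℝ) < x := hx
    have h1 : (1:ℝ) ≤ 1 + y * x := by nlinarith
    have h1' : (0:ℝ) < 1 + y * x := by linarith
    rw [norm_mul, Real.norm_eq_abs, Real.norm_eq_abs, abs_inv, abs_of_pos h1']
    calc (1 + y * x)⁻¹ * |x ^ α * Real.exp (-x) * x ^ k|
        ≤ 1 * |x ^ α * Real.exp (-x) * x ^ k| := by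
          apply mul_le_mul_of_nonneg_right _ (abs_nonneg _)
          exact inv_le_one_of_one_le₀ h1
      _ = |x ^ α * Real.exp (-x) * x ^ k| := one_mul _

lemma w_lag_expand {α y : ℝ} (m : ℕ) :
    (fun ρ : ℝ => (1 + y * ρ)⁻¹ * ρ ^ α * Real.exp (-ρ) * genLaguerre α m ρ)
      = fun ρ : ℝ => ∑ j ∈ Finset.range (m+1),
          lagCoef α m j * ((1 + y * ρ)⁻¹ * (ρ ^ α * Real.exp (-ρ) * ρ ^ j)) := by
  funext ρ
  rw [genLaguerre_eq, Finset.mul_sum]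
  exact Finset.sum_congr rfl fun j _ => by ring

lemma integrable_w_lag {α y : ℝ} (hα : -1 < α) (hy : 0 < y) (m : ℕ) :
    IntegrableOn (fun ρ : ℝ => (1 + y * ρ)⁻¹ * ρ ^ α * Real.exp (-ρ) * genLaguerre α m ρ)
      (Ioi (0:ℝ)) := by
  rw [w_lag_expand]
  exact integrable_finset_sum _ fun j _ => ((integrable_w_pow hα hy j).const_mul _)

lemma Imn_eq {α y : ℝ} (hα : -1 < α) (m : ℕ) :
    Imn α α y m 0
      = ∫ ρ in Ioi (0:ℝ), (1 + y * ρ)⁻¹ * ρ ^ α * Real.exp (-ρ) * genLaguerre α m ρ := by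
  unfold Imn
  congr 1
  funext ρ
  rw [lag_zero hα, mul_one]

lemma cdS_integral {α y : ℝ} (hα : -1 < α) (hy : 0 < y) (m : ℕ) :
    ∫ ρ in Ioi (0:ℝ), ρ ^ α * Real.exp (-ρ) * cdS α (m+1) (-1/y) ρ = 1 := by
  have hexp : (fun ρ : ℝ => ρ ^ α * Real.exp (-ρ) * cdS α (m+1) (-1/y) ρ)
      = fun ρ => ∑ k ∈ Finset.range (m+1),
          ((k.factorial : ℝ) / Real.Gamma (α + k + 1) * genLaguerre α k (-1/y))
            * (ρ ^ α * Real.exp (-ρ) * genLaguerre α k ρ) := by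
    funext ρ
    unfold cdS
    rw [Finset.mul_sum]
    exact Finset.sum_congr rfl fun k _ => by ring
  rw [hexp, MeasureTheory.integral_finset_sum _
    (fun k _ => ((integrable_weight_lag hα k).const_mul _))]
  have hval : ∀ k ∈ Finset.range (m+1),
      (∫ ρ in Ioi (0:ℝ), ((k.factorial : ℝ) / Real.Gamma (α + k + 1)
            * genLaguerre α k (-1/y)) * (ρ ^ α * Real.exp (-ρ) * genLaguerre α k ρ))
        = if k = 0 then 1 else 0 := by
    intro k _
    rw [MeasureTheory.integral_const_mul, intL hα k]
    rcases eq_or_ne k 0 with rfl | hk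
    · have hG : Real.Gamma (α + 1) ≠ 0 := by
        have := gpos hα 0; simpa using this.ne'
      simp [lag_zero hα, Nat.factorial_zero]
      field_simp
    · simp [hk]
  rw [Finset.sum_congr rfl hval]
  simp

lemma key {α y : ℝ} (hα : -1 < α) (hy : 0 < y) (m : ℕ) :
    genLaguerre α (m+1) (-1/y) * Imn α α y m 0
      - genLaguerre α m (-1/y) * Imn α α y (m+1) 0
      = (1/y) * (Real.Gamma (α + m + 1) / ((m+1).factorial : ℝ)) := by
  rw [Imn_eq hα, Imn_eq hα]
  rw [← MeasureTheory.integral_const_mul, ← MeasureTheory.integral_const_mul,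
    ← MeasureTheory.integral_sub ((integrable_w_lag hα hy m).const_mul _)
      ((integrable_w_lag hα hy (m+1)).const_mul _)]
  have hcongr : EqOn
      (fun ρ : ℝ => genLaguerre α (m+1) (-1/y)
          * ((1 + y*ρ)⁻¹ * ρ ^ α * Real.exp (-ρ) * genLaguerre α m ρ)
        - genLaguerre α m (-1/y)
          * ((1 + y*ρ)⁻¹ * ρ ^ α * Real.exp (-ρ) * genLaguerre α (m+1) ρ))
      (fun ρ : ℝ => (Real.Gamma (α + m + 1) / (((m+1).factorial : ℕ) : ℝ) * (1/y))
          * (ρ ^ α * Real.exp (-ρ) * cdS α (m+1) (-1/y) ρ))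
      (Ioi (0:ℝ)) := by
    intro ρ hρ
    have hρ0 : (0:ℝ) < ρ := hρ
    have h1 : (0:ℝ) < 1 + y * ρ := by nlinarith
    have hcd := cd hα m (-1/y) ρ
    have hG : Real.Gamma (α + (m:ℝ) + 1) ≠ 0 := (gpos hα m).ne'
    have hf : (((m+1).factorial : ℕ) : ℝ) ≠ 0 := Nat.cast_ne_zero.mpr (Nat.factorial_ne_zero _)
    simp only
    field_simp at hcd
    field_simp
    linear_combination hcd
  rw [setIntegral_congr_fun measurableSet_Ioi hcongr]
  rw [MeasureTheory.integral_const_mul, cdS_integral hα hy m, mul_one]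
  ring

theorem fpoly_at_neg_inv (α y : ℝ) (hα : -1 < α) (hy : 0 < y) (n : ℕ) (hn : 1 ≤ n)
    (hI : Imn α α y (n - 1) 0 ≠ 0) :
    fpoly α y n (-1 / y) =
      (1 / Imn α α y (n - 1) 0) * (1 / y) * (Real.Gamma (α + n) / (Nat.factorial n)) := by
  obtain ⟨m, rfl⟩ : ∃ m, n = m + 1 := ⟨n - 1, by omega⟩
  simp only [fpoly, Nat.add_sub_cancel, Nat.succ_ne_zero, if_false]
  have hkey := key hα hy m
  have hgam : Real.Gamma (α + ((m+1:ℕ):ℝ)) = Real.Gamma (α + (m:ℝ) + 1) := by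
    norm_num [add_assoc]
  rw [hgam]
  have hIm := hI
  simp only [Nat.add_sub_cancel] at hIm
  have hf : (((m+1).factorial : ℕ) : ℝ) ≠ 0 := Nat.cast_ne_zero.mpr (Nat.factorial_ne_zero _)
  have hy' : y ≠ 0 := hy.ne'
  field_simp at hkey
  field_simp
  linear_combination hkey
end

section
/- For real α > -1, y > 0, natural numbers m < n, and with Ī_{m,n}^{(α,β)}(y) = (m!/Γ(m+α+1)) ∫_0^∞ (1+yρ)^{-1} ρ^α e^{-ρ} L_m^{(α)}(ρ) L_n^{(β)}(ρ) dρ, the identity Ī_{m,n}^{(α,α+1)}(y) = 1 - y(α+1) · (m!/(α+1)_m) · L_m^{(α)}(-1/y) · Ī_{0,n}^{(α+1,α+1)}(y) holds. -/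
open MeasureTheory Real Set

/-- The normalized function Ī_(m,n)^(α,β)(y). -/
noncomputable def Ibar (α β y : ℝ) (m n : ℕ) : ℝ :=
  ((Nat.factorial m : ℝ) / Real.Gamma (m + α + 1)) * Imn α β y m n


namespace LagAux

/-- rising factorial ∏_{t<j} (x+t) -/
noncomputable def poch (x : ℝ) (j : ℕ) : ℝ := ∏ t ∈ Finset.range j, (x + t)

lemma poch_zero (x : ℝ) : poch x 0 = 1 := rfl

lemma poch_succ (x : ℝ) (j : ℕ) : poch x (j+1) = poch x j * (x + j) := by
  simp [poch, Finset.prod_range_succ]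

lemma poch_succ' (x : ℝ) (j : ℕ) : poch x (j+1) = x * poch (x+1) j := by
  unfold poch
  rw [Finset.prod_range_succ']
  simp only [Nat.cast_zero, add_zero]
  rw [mul_comm]
  congr 1
  refine Finset.prod_congr rfl fun t _ => ?_
  push_cast; ring

lemma poch_diff (a : ℝ) (j : ℕ) :
    poch (a+1) (j+1) - poch a (j+1) = (j+1) * poch (a+1) j := by
  rw [poch_succ, poch_succ']
  push_cast
  ring

lemma poch_pos {x : ℝ} (hx : 0 < x) (j : ℕ) : 0 < poch x j := by
  induction j with
  | zero => simp [poch]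
  | succ k ih => rw [poch_succ]; positivity

lemma Gamma_add_nat {x : ℝ} (hx : 0 < x) (j : ℕ) :
    Real.Gamma (x + j) = Real.Gamma x * poch x j := by
  induction j with
  | zero => simp [poch]
  | succ k ih =>
    have h1 : x + (k+1:ℕ) = (x + k) + 1 := by push_cast; ring
    rw [h1, Real.Gamma_add_one (by positivity), ih, poch_succ]
    ring

lemma alt_step (n : ℕ) (g : ℕ → ℝ) :
    ∑ i ∈ Finset.range (n+2), (-1:ℝ)^i * ((n+1).choose i) * g i
      = ∑ i ∈ Finset.range (n+1), (-1:ℝ)^i * (n.choose i) * (g i - g (i+1)) := by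
  rw [Finset.sum_range_succ' (fun i => (-1:ℝ)^i * ((n+1).choose i) * g i) (n+1)]
  have pascal : ∀ i : ℕ, ((n+1).choose (i+1) : ℝ) = n.choose i + n.choose (i+1) := by
    intro i; rw [Nat.choose_succ_succ]; push_cast; ring
  have : ∀ i ∈ Finset.range (n+1), (-1:ℝ)^(i+1) * ((n+1).choose (i+1)) * g (i+1)
      = -((-1:ℝ)^i * (n.choose i) * g (i+1)) - (-1:ℝ)^i * (n.choose (i+1)) * g (i+1) := by
    intro i _; rw [pascal]; ring
  rw [Finset.sum_congr rfl this, Finset.sum_sub_distrib]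
  have shift : ∑ i ∈ Finset.range (n+1), (-1:ℝ)^i * (n.choose (i+1)) * g (i+1)
      = -∑ i ∈ Finset.range (n+1), (-1:ℝ)^(i+1) * (n.choose (i+1)) * g (i+1) := by
    rw [← Finset.sum_neg_distrib]
    exact Finset.sum_congr rfl fun i _ => by ring
  rw [shift]
  have expand : ∑ i ∈ Finset.range (n+2), (-1:ℝ)^i * (n.choose i) * g i
      = (∑ i ∈ Finset.range (n+1), (-1:ℝ)^(i+1) * (n.choose (i+1)) * g (i+1))
        + (-1:ℝ)^0 * (n.choose 0) * g 0 := Finset.sum_range_succ' _ _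
  have last : ((-1:ℝ)^(n+1) * (n.choose (n+1)) * g (n+1)) = 0 := by
    simp [Nat.choose_eq_zero_of_lt (Nat.lt_succ_self n)]
  have expand2 : ∑ i ∈ Finset.range (n+2), (-1:ℝ)^i * (n.choose i) * g i
      = (∑ i ∈ Finset.range (n+1), (-1:ℝ)^i * (n.choose i) * g i) := by
    rw [Finset.sum_range_succ, last, add_zero]
  have key : ∑ i ∈ Finset.range (n+1), (-1:ℝ)^(i+1) * (n.choose (i+1)) * g (i+1)
      = (∑ i ∈ Finset.range (n+1), (-1:ℝ)^i * (n.choose i) * g i) - g 0 := by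
    have := expand
    rw [expand2] at this
    simp only [pow_zero, Nat.choose_zero_right, Nat.cast_one, one_mul] at this
    linarith
  rw [key]
  have goalsum : ∑ i ∈ Finset.range (n+1), (-1:ℝ)^i * (n.choose i) * (g i - g (i+1))
      = (∑ i ∈ Finset.range (n+1), (-1:ℝ)^i * (n.choose i) * g i)
        - ∑ i ∈ Finset.range (n+1), (-1:ℝ)^i * (n.choose i) * g (i+1) := by
    rw [← Finset.sum_sub_distrib]; exact Finset.sum_congr rfl fun i _ => by ring
  rw [goalsum, Finset.sum_neg_distrib]
  simp only [pow_zero, Nat.choose_zero_right, Nat.cast_one, one_mul]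
  ring

/-- alternating binomial sum against rising factorials -/
noncomputable def U (n j : ℕ) (x : ℝ) : ℝ :=
  ∑ i ∈ Finset.range (n+1), (-1:ℝ)^i * (n.choose i) * poch (x + i) j

lemma U_succ_succ (n j : ℕ) (x : ℝ) : U (n+1) (j+1) x = -(j+1) * U n j (x+1) := by
  unfold U
  rw [show n+1+1 = n+2 from rfl, alt_step n (fun i => poch (x + i) (j+1))]
  rw [Finset.mul_sum]
  refine Finset.sum_congr rfl fun i _ => ?_
  have : poch (x + i) (j+1) - poch (x + (i+1)) (j+1) = -((j+1) * poch ((x+i)+1) j) := by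
    have := poch_diff (x + i) j
    have h2 : x + ((i:ℝ)+1) = (x + i) + 1 := by ring
    push_cast
    push_cast at this h2
    rw [h2]
    linarith
  push_cast
  push_cast at this
  rw [this]
  have h3 : x + (i:ℝ) + 1 = x + 1 + i := by ring
  rw [h3]
  ring

lemma U_zero_j (n : ℕ) (x : ℝ) : U (n+1) 0 x = 0 := by
  unfold U
  have : ∀ i ∈ Finset.range (n+2), (-1:ℝ)^i * ((n+1).choose i) * poch (x+i) 0
      = (-1:ℝ)^i * ((n+1).choose i) * 1 := by intro i _; rw [poch_zero]
  rw [show n+1+1 = n+2 from rfl, Finset.sum_congr rfl this,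
    alt_step n (fun _ => (1:ℝ))]
  simp

lemma U_lt {n j : ℕ} (h : j < n) (x : ℝ) : U n j x = 0 := by
  induction n generalizing j x with
  | zero => omega
  | succ k ih =>
    cases j with
    | zero => exact U_zero_j k x
    | succ j' => rw [U_succ_succ, ih (by omega), mul_zero]

lemma U_diag (n : ℕ) (x : ℝ) : U n n x = (-1:ℝ)^n * (n.factorial) := by
  induction n generalizing x with
  | zero => simp [U, poch]
  | succ k ih =>
    rw [U_succ_succ, ih]
    push_cast [Nat.factorial_succ]
    ring


lemma integrable_rpow_exp {β : ℝ} (hβ : -1 < β) (j : ℕ) :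
    IntegrableOn (fun ρ : ℝ => ρ ^ β * Real.exp (-ρ) * ρ ^ j) (Ioi 0) := by
  have h : (0:ℝ) < β + j + 1 := by
    have : (0:ℝ) ≤ j := Nat.cast_nonneg j
    linarith
  have := Real.GammaIntegral_convergent h
  refine this.congr_fun ?_ measurableSet_Ioi
  intro x hx
  have hx0 : (0:ℝ) < x := hx
  simp only
  rw [show β + (j:ℝ) + 1 - 1 = β + j from by ring, Real.rpow_add hx0,
    Real.rpow_natCast]
  ring

lemma moment {β : ℝ} (hβ : -1 < β) (j : ℕ) :
    ∫ ρ in Ioi (0:ℝ), ρ ^ β * Real.exp (-ρ) * ρ ^ j = Real.Gamma (β + j + 1) := by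
  have h : (0:ℝ) < β + j + 1 := by
    have : (0:ℝ) ≤ j := Nat.cast_nonneg j
    linarith
  rw [Real.Gamma_eq_integral h]
  refine setIntegral_congr_fun measurableSet_Ioi fun x hx => ?_
  have hx0 : (0:ℝ) < x := hx
  rw [show β + (j:ℝ) + 1 - 1 = β + j from by ring, Real.rpow_add hx0,
    Real.rpow_natCast]
  ring


lemma J_formula {β : ℝ} (hβ : -1 < β) (n j : ℕ) :
    ∫ ρ in Ioi (0:ℝ), ρ ^ β * Real.exp (-ρ) * genLaguerre β n ρ * ρ ^ j
      = Real.Gamma (β + n + 1) / n.factorial * U n j (β + 1) := by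
  set c : ℕ → ℝ := fun i =>
    (-1:ℝ)^i * (Real.Gamma (β + n + 1) / (Real.Gamma (β + i + 1) * (Nat.factorial (n - i))))
      / i.factorial with hc
  have key : EqOn (fun ρ : ℝ => ρ ^ β * Real.exp (-ρ) * genLaguerre β n ρ * ρ ^ j)
      (fun ρ : ℝ => ∑ i ∈ Finset.range (n+1), c i * (ρ ^ β * Real.exp (-ρ) * ρ ^ (i+j)))
      (Ioi 0) := by
    intro ρ _
    simp only [genLaguerre, Finset.mul_sum, Finset.sum_mul, hc]
    refine Finset.sum_congr rfl fun i _ => ?_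
    rw [pow_add]; ring
  rw [setIntegral_congr_fun measurableSet_Ioi key,
    MeasureTheory.integral_finset_sum _
      (fun i _ => ((integrable_rpow_exp hβ (i+j)).const_mul (c i)))]
  simp_rw [MeasureTheory.integral_const_mul, moment hβ]
  unfold U
  rw [Finset.mul_sum]
  refine Finset.sum_congr rfl fun i hi => ?_
  have hin : i ≤ n := Nat.lt_succ_iff.mp (Finset.mem_range.mp hi)
  have hΓpos : (0:ℝ) < β + i + 1 := by
    have : (0:ℝ) ≤ i := Nat.cast_nonneg i
    linarith
  have hΓ : Real.Gamma (β + ↑(i+j) + 1) = Real.Gamma (β + i + 1) * poch (β + i + 1) j := by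
    have harg : β + ↑(i+j) + 1 = (β + i + 1) + j := by push_cast; ring
    rw [harg, Gamma_add_nat hΓpos]
  have hfac : ((n.choose i : ℝ)) * i.factorial * (n-i).factorial = n.factorial := by
    exact_mod_cast congrArg (Nat.cast : ℕ → ℝ) (Nat.choose_mul_factorial_mul_factorial hin)
  have hΓne : Real.Gamma (β + i + 1) ≠ 0 := (Real.Gamma_pos_of_pos hΓpos).ne'
  have hfi : (i.factorial : ℝ) ≠ 0 := Nat.cast_ne_zero.mpr i.factorial_ne_zero
  have hfni : ((n-i).factorial : ℝ) ≠ 0 := Nat.cast_ne_zero.mpr (n-i).factorial_ne_zero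
  have hfn : (n.factorial : ℝ) ≠ 0 := Nat.cast_ne_zero.mpr n.factorial_ne_zero
  have hpoch : poch (β + 1 + ↑i) j = poch (β + ↑i + 1) j := by
    unfold poch; refine Finset.prod_congr rfl fun t _ => by ring
  rw [hc, hΓ, hpoch]
  field_simp
  linear_combination (-1 * Real.Gamma (β+↑n+1) * poch (β + ↑i + 1) j) * hfac


/-! ### Laguerre as polynomial -/

noncomputable def lagPoly (β : ℝ) (n : ℕ) : Polynomial ℝ :=
  ∑ j ∈ Finset.range (n+1),
    Polynomial.C ((-1:ℝ)^j * (Real.Gamma (β + n + 1) /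
      (Real.Gamma (β + j + 1) * (Nat.factorial (n - j)))) / (Nat.factorial j)) * Polynomial.X ^ j

lemma lagPoly_eval (β : ℝ) (n : ℕ) (x : ℝ) :
    (lagPoly β n).eval x = genLaguerre β n x := by
  unfold lagPoly genLaguerre
  rw [Polynomial.eval_finset_sum]
  refine Finset.sum_congr rfl fun j _ => ?_
  simp [Polynomial.eval_mul, Polynomial.eval_pow]
  ring

lemma lagPoly_natDegree (β : ℝ) (n : ℕ) : (lagPoly β n).natDegree ≤ n := by
  refine Polynomial.natDegree_sum_le_of_forall_le _ _ fun j hj => ?_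
  refine le_trans (Polynomial.natDegree_C_mul_le _ _) ?_
  rw [Polynomial.natDegree_X_pow]
  exact Nat.lt_succ_iff.mp (Finset.mem_range.mp hj)

lemma lagPoly_coeff_top {β : ℝ} (n : ℕ) (h : Real.Gamma (β + n + 1) ≠ 0) :
    (lagPoly β n).coeff n = (-1:ℝ)^n / n.factorial := by
  unfold lagPoly
  rw [Polynomial.finset_sum_coeff]
  simp only [Polynomial.coeff_C_mul, Polynomial.coeff_X_pow]
  rw [Finset.sum_eq_single n]
  · simp [Nat.sub_self]
    field_simp
  · intro b _ hbn
    simp [Ne.symm hbn]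
  · intro hn; exact absurd (Finset.self_mem_range_succ n) hn

lemma genLaguerre_zero {β : ℝ} (h : Real.Gamma (β + 1) ≠ 0) (x : ℝ) :
    genLaguerre β 0 x = 1 := by
  unfold genLaguerre
  rw [Finset.sum_range_one]
  norm_num
  exact h

/-! ### integrability -/

lemma integrable_w_poly {β : ℝ} (hβ : -1 < β) (P : Polynomial ℝ) :
    IntegrableOn (fun ρ : ℝ => ρ ^ β * Real.exp (-ρ) * P.eval ρ) (Ioi 0) := by
  have hsum : IntegrableOn (fun ρ : ℝ => ∑ i ∈ Finset.range (P.natDegree + 1),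
      P.coeff i * (ρ ^ β * Real.exp (-ρ) * ρ ^ i)) (Ioi 0) :=
    MeasureTheory.integrable_finset_sum _
      (fun i _ => (integrable_rpow_exp hβ i).const_mul (P.coeff i))
  refine hsum.congr_fun (fun ρ _ => ?_) measurableSet_Ioi
  rw [Polynomial.eval_eq_sum_range, Finset.mul_sum]
  exact Finset.sum_congr rfl fun i _ => by ring

lemma integrable_K_w_poly {β y : ℝ} (hβ : -1 < β) (hy : 0 < y) (P : Polynomial ℝ) :
    IntegrableOn (fun ρ : ℝ => (1 + y * ρ)⁻¹ * (ρ ^ β * Real.exp (-ρ) * P.eval ρ)) (Ioi 0) := by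
  have hint := integrable_w_poly hβ P
  refine MeasureTheory.Integrable.mono' hint.abs ?_ ?_
  · have hcont : ContinuousOn (fun ρ : ℝ => (1 + y * ρ)⁻¹ * (ρ ^ β * Real.exp (-ρ) * P.eval ρ))
        (Ioi 0) := by
      have h1 : ContinuousOn (fun ρ : ℝ => (1 + y * ρ)⁻¹) (Ioi 0) := by
        refine ContinuousOn.inv₀ (Continuous.continuousOn (by continuity)) fun x hx => ?_
        have hx0 : (0:ℝ) < x := hx
        nlinarith
      have h2 : ContinuousOn (fun ρ : ℝ => ρ ^ β) (Ioi 0) := fun x hx =>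
        (Real.continuousAt_rpow_const x β (Or.inl (ne_of_gt hx))).continuousWithinAt
      exact h1.mul ((h2.mul (Continuous.continuousOn (by continuity))).mul
        (Polynomial.continuous P).continuousOn)
    exact hcont.aestronglyMeasurable measurableSet_Ioi
  · rw [MeasureTheory.ae_restrict_iff' measurableSet_Ioi]
    refine MeasureTheory.ae_of_all _ fun x hx => ?_
    have hx0 : (0:ℝ) < x := hx
    have h1 : (1:ℝ) ≤ 1 + y * x := by nlinarith
    have h2 : |(1 + y * x)⁻¹| ≤ 1 := by
      rw [abs_inv]
      rw [abs_of_pos (by linarith : (0:ℝ) < 1 + y * x)]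
      exact inv_le_one_of_one_le₀ h1
    calc ‖(1 + y * x)⁻¹ * (x ^ β * Real.exp (-x) * P.eval x)‖
        = |(1 + y * x)⁻¹| * |x ^ β * Real.exp (-x) * P.eval x| := abs_mul _ _
      _ ≤ 1 * |x ^ β * Real.exp (-x) * P.eval x| :=
          mul_le_mul_of_nonneg_right h2 (abs_nonneg _)
      _ = |x ^ β * Real.exp (-x) * P.eval x| := one_mul _

lemma integrable_w_L {β : ℝ} (hβ : -1 < β) (n j : ℕ) :
    IntegrableOn (fun ρ : ℝ => ρ ^ β * Real.exp (-ρ) * genLaguerre β n ρ * ρ ^ j) (Ioi 0) := by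
  have := integrable_w_poly hβ (lagPoly β n * Polynomial.X ^ j)
  refine this.congr_fun (fun ρ _ => ?_) measurableSet_Ioi
  simp only [Polynomial.eval_mul, Polynomial.eval_pow, Polynomial.eval_X, lagPoly_eval]
  ring

/-! ### orthogonality -/

lemma integral_w_L_eval {β : ℝ} (hβ : -1 < β) (n N : ℕ) (P : Polynomial ℝ)
    (hP : P.natDegree < N) :
    ∫ ρ in Ioi (0:ℝ), ρ ^ β * Real.exp (-ρ) * genLaguerre β n ρ * P.eval ρ
      = ∑ j ∈ Finset.range N, P.coeff j *
          (Real.Gamma (β + n + 1) / n.factorial * U n j (β + 1)) := by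
  have key : EqOn (fun ρ : ℝ => ρ ^ β * Real.exp (-ρ) * genLaguerre β n ρ * P.eval ρ)
      (fun ρ : ℝ => ∑ j ∈ Finset.range N,
        P.coeff j * (ρ ^ β * Real.exp (-ρ) * genLaguerre β n ρ * ρ ^ j)) (Ioi 0) := by
    intro ρ _
    simp only
    rw [Polynomial.eval_eq_sum_range' hP, Finset.mul_sum]
    exact Finset.sum_congr rfl fun j _ => by ring
  rw [setIntegral_congr_fun measurableSet_Ioi key,
    MeasureTheory.integral_finset_sum _
      (fun j _ => (integrable_w_L hβ n j).const_mul (P.coeff j))]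
  exact Finset.sum_congr rfl fun j _ => by
    rw [MeasureTheory.integral_const_mul, J_formula hβ]

lemma ortho_poly {β : ℝ} (hβ : -1 < β) {n : ℕ} (P : Polynomial ℝ)
    (hP : P.natDegree < n) :
    ∫ ρ in Ioi (0:ℝ), ρ ^ β * Real.exp (-ρ) * genLaguerre β n ρ * P.eval ρ = 0 := by
  rw [integral_w_L_eval hβ n n P hP]
  refine Finset.sum_eq_zero fun j hj => ?_
  rw [U_lt (Finset.mem_range.mp hj), mul_zero, mul_zero]

lemma cross_eq_zero {β : ℝ} (hβ : -1 < β) {m k : ℕ} (hne : m ≠ k) :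
    ∫ ρ in Ioi (0:ℝ), ρ ^ β * Real.exp (-ρ) * genLaguerre β m ρ * genLaguerre β k ρ = 0 := by
  rcases lt_or_gt_of_ne hne with h | h
  · -- m < k : reorder
    have key : EqOn (fun ρ : ℝ => ρ ^ β * Real.exp (-ρ) * genLaguerre β m ρ * genLaguerre β k ρ)
        (fun ρ : ℝ => ρ ^ β * Real.exp (-ρ) * genLaguerre β k ρ * (lagPoly β m).eval ρ)
        (Ioi 0) := fun ρ _ => by simp only [lagPoly_eval]; ring
    rw [setIntegral_congr_fun measurableSet_Ioi key]
    exact ortho_poly hβ _ (lt_of_le_of_lt (lagPoly_natDegree β m) h)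
  · have key : EqOn (fun ρ : ℝ => ρ ^ β * Real.exp (-ρ) * genLaguerre β m ρ * genLaguerre β k ρ)
        (fun ρ : ℝ => ρ ^ β * Real.exp (-ρ) * genLaguerre β m ρ * (lagPoly β k).eval ρ)
        (Ioi 0) := fun ρ _ => by simp only [lagPoly_eval]
    rw [setIntegral_congr_fun measurableSet_Ioi key]
    exact ortho_poly hβ _ (lt_of_le_of_lt (lagPoly_natDegree β k) h)

lemma norm_sq {β : ℝ} (hβ : -1 < β) (m : ℕ) :
    ∫ ρ in Ioi (0:ℝ), ρ ^ β * Real.exp (-ρ) * genLaguerre β m ρ * genLaguerre β m ρ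
      = Real.Gamma (β + m + 1) / m.factorial := by
  have hΓpos : (0:ℝ) < β + m + 1 := by
    have : (0:ℝ) ≤ m := Nat.cast_nonneg m
    linarith
  have hΓne : Real.Gamma (β + m + 1) ≠ 0 := (Real.Gamma_pos_of_pos hΓpos).ne'
  have key : EqOn (fun ρ : ℝ => ρ ^ β * Real.exp (-ρ) * genLaguerre β m ρ * genLaguerre β m ρ)
      (fun ρ : ℝ => ρ ^ β * Real.exp (-ρ) * genLaguerre β m ρ * (lagPoly β m).eval ρ)
      (Ioi 0) := fun ρ _ => by simp only [lagPoly_eval]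
  rw [setIntegral_congr_fun measurableSet_Ioi key,
    integral_w_L_eval hβ m (m+1) _ (Nat.lt_succ_of_le (lagPoly_natDegree β m)),
    Finset.sum_range_succ]
  have hzero : ∀ j ∈ Finset.range m, (lagPoly β m).coeff j *
      (Real.Gamma (β + m + 1) / m.factorial * U m j (β + 1)) = 0 := fun j hj => by
    rw [U_lt (Finset.mem_range.mp hj), mul_zero, mul_zero]
  rw [Finset.sum_eq_zero hzero, zero_add, lagPoly_coeff_top m hΓne, U_diag]
  have hfm : (m.factorial : ℝ) ≠ 0 := Nat.cast_ne_zero.mpr m.factorial_ne_zero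
  field_simp
  have h1 : ((-1:ℝ))^m * (-1:ℝ)^m = 1 := by
    rw [← pow_add, ← two_mul, pow_mul]
    norm_num
  linear_combination h1

/-! ### factorization lemma -/

lemma key_factor {β y : ℝ} (hβ : -1 < β) (hy : 0 < y) {n : ℕ} (P : Polynomial ℝ)
    (hP : P.natDegree < n) :
    ∫ ρ in Ioi (0:ℝ), (1 + y * ρ)⁻¹ * (ρ ^ β * Real.exp (-ρ) * (genLaguerre β n ρ * P.eval ρ))
      = P.eval (-1/y) *
        ∫ ρ in Ioi (0:ℝ), (1 + y * ρ)⁻¹ * (ρ ^ β * Real.exp (-ρ) * genLaguerre β n ρ) := by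
  set c : ℝ := -1/y with hc
  set D : Polynomial ℝ := P - Polynomial.C (P.eval c) with hD
  have hroot : D.IsRoot c := by simp [hD]
  obtain ⟨R, hR⟩ := (Polynomial.dvd_iff_isRoot.mpr hroot)
  have hRdeg : R.natDegree < n := by
    by_cases hR0 : R = 0
    · simp only [hR0, Polynomial.natDegree_zero]; omega
    · have hXc : (Polynomial.X - Polynomial.C c) ≠ 0 := Polynomial.X_sub_C_ne_zero c
      have : D.natDegree = 1 + R.natDegree := by
        rw [hR, Polynomial.natDegree_mul hXc hR0, Polynomial.natDegree_X_sub_C]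
      have hDdeg : D.natDegree ≤ P.natDegree := by
        rw [hD]
        exact le_trans (Polynomial.natDegree_sub_le _ _)
          (by simp [Polynomial.natDegree_C])
      omega
  -- pointwise decomposition
  have hptwise : EqOn
      (fun ρ : ℝ => (1 + y * ρ)⁻¹ * (ρ ^ β * Real.exp (-ρ) * (genLaguerre β n ρ * P.eval ρ)))
      (fun ρ : ℝ => P.eval c * ((1 + y * ρ)⁻¹ * (ρ ^ β * Real.exp (-ρ) * genLaguerre β n ρ))
        + (1/y) * (ρ ^ β * Real.exp (-ρ) * genLaguerre β n ρ * R.eval ρ)) (Ioi 0) := by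
    intro ρ hρ
    have hρ0 : (0:ℝ) < ρ := hρ
    have hden : (0:ℝ) < 1 + y * ρ := by nlinarith
    have hPeval : P.eval ρ = P.eval c + (ρ - c) * R.eval ρ := by
      have h1 : Polynomial.eval ρ D = (ρ - c) * R.eval ρ := by
        rw [hR]; simp [mul_comm]
      have h2 : Polynomial.eval ρ D = P.eval ρ - P.eval c := by simp [hD]
      linarith
    have hfrac : (1 + y * ρ)⁻¹ * (ρ - c) = 1/y := by
      have h2 : ρ - c = (1 + y * ρ)/y := by rw [hc]; field_simp; ring
      rw [h2]
      field_simp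
    simp only
    rw [hPeval]
    have expand : (1 + y * ρ)⁻¹ * (ρ ^ β * Real.exp (-ρ) *
        (genLaguerre β n ρ * (P.eval c + (ρ - c) * R.eval ρ)))
        = P.eval c * ((1 + y * ρ)⁻¹ * (ρ ^ β * Real.exp (-ρ) * genLaguerre β n ρ))
          + ((1 + y * ρ)⁻¹ * (ρ - c)) * (ρ ^ β * Real.exp (-ρ) * genLaguerre β n ρ * R.eval ρ) := by
      ring
    rw [expand, hfrac]
  rw [setIntegral_congr_fun measurableSet_Ioi hptwise]
  have int1 : IntegrableOn
      (fun ρ : ℝ => (1 + y * ρ)⁻¹ * (ρ ^ β * Real.exp (-ρ) * genLaguerre β n ρ)) (Ioi 0) := by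
    refine (integrable_K_w_poly hβ hy (lagPoly β n)).congr_fun (fun ρ _ => ?_) measurableSet_Ioi
    simp only [lagPoly_eval]
  have int2 : IntegrableOn
      (fun ρ : ℝ => ρ ^ β * Real.exp (-ρ) * genLaguerre β n ρ * R.eval ρ) (Ioi 0) := by
    refine (integrable_w_poly hβ (lagPoly β n * R)).congr_fun (fun ρ _ => ?_) measurableSet_Ioi
    simp only [Polynomial.eval_mul, lagPoly_eval]
    ring
  rw [MeasureTheory.integral_add (int1.const_mul _) (int2.const_mul _),
    MeasureTheory.integral_const_mul, MeasureTheory.integral_const_mul,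
    ortho_poly hβ R hRdeg, mul_zero, add_zero]


lemma lag_recurrence {α : ℝ} (hα : -1 < α) (n : ℕ) (x : ℝ) :
    genLaguerre (α+1) (n+1) x = genLaguerre (α+1) n x + genLaguerre α (n+1) x := by
  unfold genLaguerre
  rw [Finset.sum_range_succ, Finset.sum_range_succ
    (fun j => (-1:ℝ)^j * (Real.Gamma (α + ↑(n+1) + 1) /
      (Real.Gamma (α + ↑j + 1) * ((n+1-j).factorial : ℝ))) * x ^ j / (j.factorial : ℝ))]
  have hlast : (-1:ℝ)^(n+1) * (Real.Gamma (α+1 + ↑(n+1) + 1) /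
        (Real.Gamma (α+1 + ↑(n+1) + 1) * ((n+1-(n+1)).factorial : ℝ))) * x^(n+1) / ((n+1).factorial : ℝ)
      = (-1:ℝ)^(n+1) * (Real.Gamma (α + ↑(n+1) + 1) /
        (Real.Gamma (α + ↑(n+1) + 1) * ((n+1-(n+1)).factorial : ℝ))) * x^(n+1) / ((n+1).factorial : ℝ) := by
    have h1 : (0:ℝ) < α + 1 + ↑(n+1) + 1 := by
      have : (0:ℝ) ≤ (n+1:ℕ) := Nat.cast_nonneg _
      linarith
    have h2 : (0:ℝ) < α + ↑(n+1) + 1 := by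
      have : (0:ℝ) ≤ (n+1:ℕ) := Nat.cast_nonneg _
      linarith
    have g1 := (Real.Gamma_pos_of_pos h1).ne'
    have g2 := (Real.Gamma_pos_of_pos h2).ne'
    rw [Nat.sub_self]
    simp only [Nat.factorial_zero, Nat.cast_one, mul_one]
    rw [div_self g1, div_self g2]
  have hterm : ∀ j ∈ Finset.range (n+1),
      (-1:ℝ)^j * (Real.Gamma (α+1 + ↑(n+1) + 1) /
        (Real.Gamma (α+1 + ↑j + 1) * ((n+1-j).factorial : ℝ))) * x^j / (j.factorial : ℝ)
      = (-1:ℝ)^j * (Real.Gamma (α+1 + ↑n + 1) /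
          (Real.Gamma (α+1 + ↑j + 1) * ((n-j).factorial : ℝ))) * x^j / (j.factorial : ℝ)
        + (-1:ℝ)^j * (Real.Gamma (α + ↑(n+1) + 1) /
          (Real.Gamma (α + ↑j + 1) * ((n+1-j).factorial : ℝ))) * x^j / (j.factorial : ℝ) := by
    intro j hj
    have hjn : j ≤ n := Nat.lt_succ_iff.mp (Finset.mem_range.mp hj)
    have hj1pos : (0:ℝ) < α + ↑j + 1 := by
      have : (0:ℝ) ≤ j := Nat.cast_nonneg _
      linarith
    have hn2pos : (0:ℝ) < α + ↑n + 2 := by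
      have : (0:ℝ) ≤ n := Nat.cast_nonneg _
      linarith
    have e1 : α + 1 + ↑(n+1) + 1 = (α + ↑n + 2) + 1 := by push_cast; ring
    have e2 : α + ↑(n+1) + 1 = α + ↑n + 2 := by push_cast; ring
    have e3 : α + 1 + ↑n + 1 = α + ↑n + 2 := by ring
    have e4 : α + 1 + ↑j + 1 = (α + ↑j + 1) + 1 := by ring
    have hsub : n + 1 - j = (n - j) + 1 := by omega
    rw [e1, e2, e3, e4, Real.Gamma_add_one hn2pos.ne', Real.Gamma_add_one hj1pos.ne',
      hsub, Nat.factorial_succ]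
    have gn := (Real.Gamma_pos_of_pos hn2pos).ne'
    have gj := (Real.Gamma_pos_of_pos hj1pos).ne'
    have hfj : ((j.factorial : ℝ)) ≠ 0 := Nat.cast_ne_zero.mpr j.factorial_ne_zero
    have hfnj : (((n-j).factorial : ℝ)) ≠ 0 := Nat.cast_ne_zero.mpr (n-j).factorial_ne_zero
    have hnj1 : ((n:ℝ) - (j:ℝ) + 1) ≠ 0 := by
      have : (j:ℝ) ≤ n := Nat.cast_le.mpr hjn
      linarith
    push_cast [Nat.cast_sub hjn]
    field_simp
    ring
  rw [Finset.sum_congr rfl hterm, Finset.sum_add_distrib, hlast]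
  ring

lemma lag_sum {α : ℝ} (hα : -1 < α) (n : ℕ) (x : ℝ) :
    genLaguerre (α+1) n x = ∑ k ∈ Finset.range (n+1), genLaguerre α k x := by
  induction n with
  | zero =>
    rw [Finset.sum_range_one]
    unfold genLaguerre
    rw [Finset.sum_range_one, Finset.sum_range_one]
    have h1 : (0:ℝ) < α + 1 + ↑(0:ℕ) + 1 := by simp; linarith
    have h2 : (0:ℝ) < α + ↑(0:ℕ) + 1 := by simp; linarith
    have g1 := (Real.Gamma_pos_of_pos h1).ne'
    have g2 := (Real.Gamma_pos_of_pos h2).ne'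
    simp only [Nat.sub_self, Nat.factorial_zero, Nat.cast_one, mul_one, pow_zero]
    rw [div_self g1, div_self g2]
  | succ k ih =>
    rw [Finset.sum_range_succ, ← ih, lag_recurrence hα]


end LagAux

open LagAux

theorem Ibar_alpha_alphaPlusOne (α y : ℝ) (hα : -1 < α) (hy : 0 < y)
    (m n : ℕ) (hmn : m < n) :
    Ibar α (α + 1) y m n =
      1 - y * (α + 1) * ((Nat.factorial m : ℝ) * Real.Gamma (α + 1) / Real.Gamma (α + 1 + m)) *
        genLaguerre α m (-1 / y) * Ibar (α + 1) (α + 1) y 0 n := by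
  have hα1 : (-1:ℝ) < α + 1 := by linarith
  have hα1pos : (0:ℝ) < α + 1 := by linarith
  have hΓ1 := (Real.Gamma_pos_of_pos hα1pos).ne'
  have hΓ2pos : (0:ℝ) < α + 1 + 1 := by linarith
  have hΓ2 := (Real.Gamma_pos_of_pos hΓ2pos).ne'
  set E : ℝ := ∫ ρ in Ioi (0:ℝ),
      (1 + y * ρ)⁻¹ * (ρ ^ (α+1) * Real.exp (-ρ) * genLaguerre (α+1) n ρ) with hE
  set L : ℝ := genLaguerre α m (-1/y) with hL
  -- Step A : splitting
  have stepA : Imn α (α+1) y m n =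
      (∫ ρ in Ioi (0:ℝ), ρ ^ α * Real.exp (-ρ) * genLaguerre α m ρ * genLaguerre (α+1) n ρ)
      - y * ∫ ρ in Ioi (0:ℝ), (1 + y * ρ)⁻¹ *
          (ρ ^ (α+1) * Real.exp (-ρ) * (genLaguerre (α+1) n ρ * (lagPoly α m).eval ρ)) := by
    unfold Imn
    have i1 : IntegrableOn (fun ρ : ℝ =>
        ρ ^ α * Real.exp (-ρ) * genLaguerre α m ρ * genLaguerre (α+1) n ρ) (Ioi 0) := by
      refine (integrable_w_poly hα (lagPoly α m * lagPoly (α+1) n)).congr_fun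
        (fun ρ _ => ?_) measurableSet_Ioi
      simp only [Polynomial.eval_mul, lagPoly_eval]
      ring
    have i2 : IntegrableOn (fun ρ : ℝ => y * ((1 + y * ρ)⁻¹ *
        (ρ ^ (α+1) * Real.exp (-ρ) * (genLaguerre (α+1) n ρ * (lagPoly α m).eval ρ)))) (Ioi 0) := by
      refine IntegrableOn.congr_fun (((integrable_K_w_poly hα1 hy
        (lagPoly (α+1) n * lagPoly α m)).const_mul y)) (fun ρ _ => ?_) measurableSet_Ioi
      simp only [Polynomial.eval_mul, lagPoly_eval]
    have key : EqOn (fun ρ : ℝ => (1 + y * ρ)⁻¹ * ρ ^ α * Real.exp (-ρ) *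
        genLaguerre α m ρ * genLaguerre (α+1) n ρ)
        (fun ρ : ℝ => ρ ^ α * Real.exp (-ρ) * genLaguerre α m ρ * genLaguerre (α+1) n ρ
          - y * ((1 + y * ρ)⁻¹ *
            (ρ ^ (α+1) * Real.exp (-ρ) * (genLaguerre (α+1) n ρ * (lagPoly α m).eval ρ)))) (Ioi 0) := by
      intro ρ hρ
      have hρ0 : (0:ℝ) < ρ := hρ
      have hden : (0:ℝ) < 1 + y * ρ := by nlinarith
      have hinv : (1 + y * ρ)⁻¹ = 1 - y * ρ * (1 + y * ρ)⁻¹ := by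
        field_simp
        ring
      have hrpow : ρ ^ (α + 1) = ρ ^ α * ρ := Real.rpow_add_one hρ0.ne' α
      simp only [lagPoly_eval]
      calc (1 + y * ρ)⁻¹ * ρ ^ α * Real.exp (-ρ) * genLaguerre α m ρ * genLaguerre (α+1) n ρ
          = (1 - y * ρ * (1 + y * ρ)⁻¹) * ρ ^ α * Real.exp (-ρ) *
              genLaguerre α m ρ * genLaguerre (α+1) n ρ := by rw [← hinv]
        _ = ρ ^ α * Real.exp (-ρ) * genLaguerre α m ρ * genLaguerre (α+1) n ρ
            - y * ((1 + y * ρ)⁻¹ * ((ρ ^ α * ρ) * Real.exp (-ρ) *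
              (genLaguerre (α+1) n ρ * genLaguerre α m ρ))) := by ring
        _ = _ := by rw [← hrpow]
    rw [setIntegral_congr_fun measurableSet_Ioi key, MeasureTheory.integral_sub i1 i2,
      MeasureTheory.integral_const_mul]
  -- Step B : first integral
  have stepB : (∫ ρ in Ioi (0:ℝ), ρ ^ α * Real.exp (-ρ) * genLaguerre α m ρ *
      genLaguerre (α+1) n ρ) = Real.Gamma (α + m + 1) / m.factorial := by
    have key : EqOn (fun ρ : ℝ => ρ ^ α * Real.exp (-ρ) * genLaguerre α m ρ *
        genLaguerre (α+1) n ρ)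
        (fun ρ : ℝ => ∑ k ∈ Finset.range (n+1),
          ρ ^ α * Real.exp (-ρ) * genLaguerre α m ρ * genLaguerre α k ρ) (Ioi 0) := by
      intro ρ _
      simp only
      rw [lag_sum hα, Finset.mul_sum]
    rw [setIntegral_congr_fun measurableSet_Ioi key,
      MeasureTheory.integral_finset_sum _ (fun k _ => ?_)]
    · have : ∀ k ∈ Finset.range (n+1),
          (∫ ρ in Ioi (0:ℝ), ρ ^ α * Real.exp (-ρ) * genLaguerre α m ρ * genLaguerre α k ρ)
          = if k = m then Real.Gamma (α + m + 1) / m.factorial else 0 := by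
        intro k _
        by_cases hkm : k = m
        · rw [hkm, if_pos rfl, norm_sq hα]
        · rw [if_neg hkm, cross_eq_zero hα (fun h => hkm h.symm)]
      rw [Finset.sum_congr rfl this, Finset.sum_ite_eq' (Finset.range (n+1)) m
        (fun _ => Real.Gamma (α + m + 1) / m.factorial),
        if_pos (Finset.mem_range.mpr (Nat.lt_succ_of_lt hmn))]
    · refine (integrable_w_poly hα (lagPoly α m * lagPoly α k)).congr_fun
        (fun ρ _ => ?_) measurableSet_Ioi
      simp only [Polynomial.eval_mul, lagPoly_eval]
      ring
  -- Step C : factorization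
  have stepC : (∫ ρ in Ioi (0:ℝ), (1 + y * ρ)⁻¹ *
      (ρ ^ (α+1) * Real.exp (-ρ) * (genLaguerre (α+1) n ρ * (lagPoly α m).eval ρ))) = L * E := by
    rw [key_factor hα1 hy (lagPoly α m) (lt_of_le_of_lt (lagPoly_natDegree α m) hmn),
      lagPoly_eval, ← hE, ← hL]
  -- Step D : E = Imn (α+1) (α+1) y 0 n
  have stepD : Imn (α+1) (α+1) y 0 n = E := by
    unfold Imn
    rw [hE]
    refine setIntegral_congr_fun measurableSet_Ioi fun ρ _ => ?_
    rw [genLaguerre_zero hΓ2]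
    ring
  -- assemble
  unfold Ibar
  rw [stepA, stepB, stepC, ← stepD]
  have hfm : ((m.factorial : ℝ)) ≠ 0 := Nat.cast_ne_zero.mpr m.factorial_ne_zero
  have hG1 : Real.Gamma ((m:ℝ) + α + 1) = Real.Gamma (α + m + 1) := by
    rw [show (m:ℝ) + α + 1 = α + m + 1 by ring]
  have hG2 : Real.Gamma (α + 1 + (m:ℝ)) = Real.Gamma (α + m + 1) := by
    rw [show α + 1 + (m:ℝ) = α + m + 1 by ring]
  have hG3 : Real.Gamma ((0:ℕ) + (α + 1) + 1) = (α + 1) * Real.Gamma (α + 1) := by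
    rw [show ((0:ℕ):ℝ) + (α + 1) + 1 = (α + 1) + 1 by push_cast; ring,
      Real.Gamma_add_one hα1pos.ne']
  have hGm1 : (0:ℝ) < α + (m:ℝ) + 1 := by
    have : (0:ℝ) ≤ m := Nat.cast_nonneg _
    linarith
  have hGm := (Real.Gamma_pos_of_pos hGm1).ne'
  rw [hG1, hG2, hG3]
  simp only [Nat.factorial_zero, Nat.cast_one]
  field_simp
end
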